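/- arXiv:2107.13162 — 5 statements merged into one kernel-verified Lean document; each statement's English description precedes it below -/
import Mathlib

section
/- Let V be a k×k nonnegative irreducible symmetric real matrix and z ∈ (0,∞)^k with ρ(V·D[z_j]) ≤ 1. If y, z ∈ (0,∞)^k both satisfy ρ(V·D[y_j]) ≤ 1, ρ(V·D[z_j]) ≤ 1, and y_j·exp(-(V y)_j) = z_j·exp(-(V z)_j) for all j = 1,…,k, then y = z. -/
/-- Spectral radius of a real matrix: supremum of the absolute values of its
complex eigenvalues. -/
noncomputable def rho {k : ℕ} (M : Matrix (Fin k) (Fin k) ℝ) : ℝ :=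
  sSup {r : ℝ | ∃ μ ∈ spectrum ℂ (M.map (algebraMap ℝ ℂ)), r = ‖μ‖}

/-- A matrix is irreducible if its associated directed graph is strongly
connected. -/
def IsIrred {k : ℕ} (M : Matrix (Fin k) (Fin k) ℝ) : Prop :=
  ∀ S : Finset (Fin k), S.Nonempty → S ≠ Finset.univ → ∃ i ∈ S, ∃ j ∈ Sᶜ, M i j ≠ 0

open Matrix

lemma norm_spectrum_bddAbove {k : ℕ} (M : Matrix (Fin k) (Fin k) ℂ) :
    BddAbove {r : ℝ | ∃ μ ∈ spectrum ℂ M, r = ‖μ‖} := by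
  have h : {r : ℝ | ∃ μ ∈ spectrum ℂ M, r = ‖μ‖} = (fun μ => ‖μ‖) '' (spectrum ℂ M) := by
    ext r; simp [Set.mem_image, eq_comm]
  rw [h]
  exact ((M.finite_spectrum).image _).bddAbove

lemma real_spec_abs_le {k : ℕ} {M : Matrix (Fin k) (Fin k) ℝ} (hρ : rho M ≤ 1)
    {μ : ℝ} (hμ : μ ∈ spectrum ℝ M) : |μ| ≤ 1 := by
  have hdet : ((algebraMap ℝ (Matrix (Fin k) (Fin k) ℝ) μ) - M).det = 0 := by
    have h := spectrum.mem_iff.mp hμ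
    rwa [Matrix.isUnit_iff_isUnit_det, isUnit_iff_ne_zero, not_not] at h
  have hmem : ((μ : ℂ)) ∈ spectrum ℂ (M.map (algebraMap ℝ ℂ)) := by
    rw [spectrum.mem_iff, Matrix.isUnit_iff_isUnit_det, isUnit_iff_ne_zero, not_not]
    have heq2 : (algebraMap ℂ (Matrix (Fin k) (Fin k) ℂ) ((μ : ℂ))) - M.map (algebraMap ℝ ℂ)
        = ((algebraMap ℝ (Matrix (Fin k) (Fin k) ℝ) μ) - M).map (algebraMap ℝ ℂ) := by
      ext i j
      by_cases hij : i = j <;>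
        simp [Matrix.algebraMap_matrix_apply, hij, Matrix.map_apply, Matrix.sub_apply]
    rw [heq2, ← RingHom.mapMatrix_apply, ← RingHom.map_det, hdet, map_zero]
  have h1 : ‖(μ : ℂ)‖ ≤ rho M := le_csSup (norm_spectrum_bddAbove _) ⟨_, hmem, rfl⟩
  rw [Complex.norm_real] at h1
  exact h1.trans hρ

lemma exists_good_S {k : ℕ} (V : Matrix (Fin k) (Fin k) ℝ) (hsym : ∀ i j, V i j = V j i)
    (x : Fin k → ℝ) (hx : ∀ i, 0 < x i) (hρ : rho (V * Matrix.diagonal x) ≤ 1) :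
    ∃ S : Matrix (Fin k) (Fin k) ℝ,
      (∀ j i, S j i = Real.sqrt (x j) * V j i * Real.sqrt (x i)) ∧
      (∀ v, v ⬝ᵥ (S *ᵥ v) ≤ v ⬝ᵥ v) ∧
      (∀ v, v ⬝ᵥ (S *ᵥ v) = v ⬝ᵥ v → S *ᵥ v = v) := by
  set s : Fin k → ℝ := fun i => Real.sqrt (x i) with hs_def
  have hs : ∀ i, 0 < s i := fun i => Real.sqrt_pos.mpr (hx i)
  have hss : ∀ i, s i * s i = x i := fun i => Real.mul_self_sqrt (hx i).le
  set S : Matrix (Fin k) (Fin k) ℝ := Matrix.diagonal s * V * Matrix.diagonal s with hS_def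
  have hent : ∀ j i, S j i = s j * V j i * s i := by
    intro j i
    rw [hS_def, Matrix.mul_diagonal, Matrix.diagonal_mul]
  -- the diagonal unit
  have hdd : Matrix.diagonal s * Matrix.diagonal (fun i => (s i)⁻¹) = 1 := by
    rw [Matrix.diagonal_mul_diagonal]
    have : (fun i => s i * (s i)⁻¹) = fun _ => (1 : ℝ) :=
      funext fun i => mul_inv_cancel₀ (hs i).ne'
    rw [this, Matrix.diagonal_one]
  have hdd' : Matrix.diagonal (fun i => (s i)⁻¹) * Matrix.diagonal s = 1 := by
    rw [Matrix.diagonal_mul_diagonal]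
    have : (fun i => (s i)⁻¹ * s i) = fun _ => (1 : ℝ) :=
      funext fun i => inv_mul_cancel₀ (hs i).ne'
    rw [this, Matrix.diagonal_one]
  let u : (Matrix (Fin k) (Fin k) ℝ)ˣ :=
    ⟨Matrix.diagonal s, Matrix.diagonal (fun i => (s i)⁻¹), hdd, hdd'⟩
  have hconj : u.val * (V * Matrix.diagonal x) * (u⁻¹).val = S := by
    show Matrix.diagonal s * (V * Matrix.diagonal x) * Matrix.diagonal (fun i => (s i)⁻¹) = S
    ext j i
    rw [Matrix.mul_diagonal, Matrix.diagonal_mul, Matrix.mul_diagonal, hent]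
    have h5 : x i * (s i)⁻¹ = s i := by
      rw [← hss i]
      exact mul_inv_cancel_right₀ (hs i).ne' (s i)
    rw [mul_assoc, mul_assoc, h5, ← mul_assoc]
  have hspeceq : spectrum ℝ S = spectrum ℝ (V * Matrix.diagonal x) := by
    rw [← hconj]; exact spectrum.units_conjugate
  have hH : S.IsHermitian := by
    show Sᴴ = S
    ext i j
    rw [Matrix.conjTranspose_apply, star_trivial, hent, hent, hsym]
    ring
  have hH1 : (1 - S).IsHermitian := Matrix.isHermitian_one.sub hH
  have hpsd : (1 - S).PosSemidef := by
    refine hH1.posSemidef_iff_eigenvalues_nonneg.mpr (Pi.le_def.mpr fun i => show (0:ℝ) ≤ _ from ?_)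
    have hμ : hH1.eigenvalues i ∈ spectrum ℝ (1 - S) := hH1.eigenvalues_mem_spectrum_real i
    set μ := hH1.eigenvalues i
    have h2 : (1 - μ) ∈ spectrum ℝ S := by
      rw [spectrum.mem_iff] at hμ ⊢
      have e : algebraMap ℝ (Matrix (Fin k) (Fin k) ℝ) (1 - μ) - S
          = -(algebraMap ℝ (Matrix (Fin k) (Fin k) ℝ) μ - (1 - S)) := by
        rw [map_sub, _root_.map_one]; abel
      rw [e, IsUnit.neg_iff]
      exact hμ
    have h3 := real_spec_abs_le hρ (hspeceq ▸ h2)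
    have h4 := (abs_le.mp h3).2
    linarith
  refine ⟨S, hent, fun v => ?_, fun v hv => ?_⟩
  · have h := hpsd.dotProduct_mulVec_nonneg v
    rw [star_trivial, Matrix.sub_mulVec, Matrix.one_mulVec, dotProduct_sub] at h
    linarith
  · have h := (hpsd.dotProduct_mulVec_zero_iff v).mp ?_
    · rw [Matrix.sub_mulVec, Matrix.one_mulVec] at h
      have := sub_eq_zero.mp h
      exact this.symm
    · rw [star_trivial, Matrix.sub_mulVec, Matrix.one_mulVec, dotProduct_sub, hv, sub_self]
lemma core_perron {k : ℕ} (S : Matrix (Fin k) (Fin k) ℝ)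
    (hnnS : ∀ i j, 0 ≤ S i j) (hirrS : IsIrred S)
    (hq : ∀ v : Fin k → ℝ, v ⬝ᵥ (S *ᵥ v) ≤ v ⬝ᵥ v)
    (hker : ∀ v : Fin k → ℝ, v ⬝ᵥ (S *ᵥ v) = v ⬝ᵥ v → S *ᵥ v = v)
    (η : Fin k → ℝ) (hineq : ∀ j, η j ≤ (S *ᵥ η) j)
    (i₀ : Fin k) (h0 : 0 < η i₀) : ∀ j, 0 < η j := by
  classical
  set p : Fin k → ℝ := fun j => max (η j) 0 with hp_def
  have hp0 : ∀ j, 0 ≤ p j := fun j => le_max_right _ _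
  have hpη : ∀ j, η j ≤ p j := fun j => le_max_left _ _
  have hpp : ∀ j, p j * η j = p j * p j := by
    intro j
    rcases le_total (η j) 0 with h | h
    · have : p j = 0 := max_eq_right h
      rw [this]; ring
    · have : p j = η j := max_eq_left h
      rw [this]
  have hc2 : ∀ j, (S *ᵥ η) j ≤ (S *ᵥ p) j := by
    intro j
    simp only [Matrix.mulVec, dotProduct]
    exact Finset.sum_le_sum fun i _ => mul_le_mul_of_nonneg_left (hpη i) (hnnS j i)
  have hchain : p ⬝ᵥ p ≤ p ⬝ᵥ (S *ᵥ p) := by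
    have e1 : p ⬝ᵥ p = ∑ j, p j * η j := by
      simp only [dotProduct]
      exact Finset.sum_congr rfl fun j _ => (hpp j).symm
    rw [e1]
    simp only [dotProduct]
    refine Finset.sum_le_sum fun j _ => ?_
    exact mul_le_mul_of_nonneg_left ((hineq j).trans (hc2 j)) (hp0 j)
  have heq2 : p ⬝ᵥ (S *ᵥ p) = p ⬝ᵥ p := le_antisymm (hq p) hchain
  have hfix : S *ᵥ p = p := hker p heq2
  -- the zero set of p is empty
  have hZ : ∀ j, p j ≠ 0 := by
    by_contra hcon
    push_neg at hcon
    obtain ⟨a₀, ha₀⟩ := hcon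
    set Z : Finset (Fin k) := Finset.univ.filter (fun j => p j = 0) with hZ_def
    have hZne : Z.Nonempty := ⟨a₀, by simp [hZ_def, ha₀]⟩
    have hi₀ : i₀ ∉ Z := by
      simp only [hZ_def, Finset.mem_filter, Finset.mem_univ, true_and]
      have : p i₀ = η i₀ := max_eq_left h0.le
      rw [this]; exact h0.ne'
    have hZnu : Z ≠ Finset.univ := fun h => hi₀ (h ▸ Finset.mem_univ i₀)
    obtain ⟨a, haZ, b, hbZ, hab⟩ := hirrS Z hZne hZnu
    have hpa : p a = 0 := (Finset.mem_filter.mp haZ).2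
    have hpb : 0 < p b := by
      have := Finset.mem_compl.mp hbZ
      simp only [hZ_def, Finset.mem_filter, Finset.mem_univ, true_and] at this
      exact lt_of_le_of_ne (hp0 b) (Ne.symm this)
    have hSa : (S *ᵥ p) a = 0 := by rw [hfix, hpa]
    have hterms : ∀ i ∈ Finset.univ, 0 ≤ S a i * p i :=
      fun i _ => mul_nonneg (hnnS a i) (hp0 i)
    have hsum : ∑ i, S a i * p i = 0 := by
      simpa only [Matrix.mulVec, dotProduct] using hSa
    have hzero := (Finset.sum_eq_zero_iff_of_nonneg hterms).mp hsum b (Finset.mem_univ b)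
    exact hab (by
      rcases mul_eq_zero.mp hzero with h | h
      · exact h
      · exact absurd h hpb.ne')
  intro j
  rcases lt_or_ge 0 (η j) with h | h
  · exact h
  · exact absurd (max_eq_right h) (hZ j)

lemma key {k : ℕ} (V : Matrix (Fin k) (Fin k) ℝ)
    (hnn : ∀ i j, 0 ≤ V i j) (hsym : ∀ i j, V i j = V j i) (hirr : IsIrred V)
    (y z : Fin k → ℝ) (hy : ∀ i, 0 < y i) (hz : ∀ i, 0 < z i)
    (hρy : rho (V * Matrix.diagonal y) ≤ 1)
    (heq : ∀ j, y j * Real.exp (-(V.mulVec y j)) = z j * Real.exp (-(V.mulVec z j)))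
    (i₀ : Fin k) (hlt : z i₀ < y i₀) : False := by
  classical
  set δ : Fin k → ℝ := fun i => Real.log (y i) - Real.log (z i) with hδ_def
  -- the fixed point identity
  have hδ : ∀ j, δ j = ∑ i, V j i * (y i - z i) := by
    intro j
    have h1 := heq j
    have h2 : Real.log (y j) + (-(V.mulVec y j)) = Real.log (z j) + (-(V.mulVec z j)) := by
      have := congrArg Real.log h1
      rwa [Real.log_mul (hy j).ne' (Real.exp_ne_zero _),
           Real.log_mul (hz j).ne' (Real.exp_ne_zero _),
           Real.log_exp, Real.log_exp] at this
    have h3 : δ j = V.mulVec y j - V.mulVec z j := by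
      simp only [hδ_def]; linarith
    rw [h3]
    simp only [Matrix.mulVec, dotProduct, ← Finset.sum_sub_distrib]
    exact Finset.sum_congr rfl fun i _ => by ring
  -- exp bounds
  have hzy : ∀ i, z i = y i * Real.exp (-δ i) := by
    intro i
    rw [hδ_def]
    simp only [neg_sub]
    rw [Real.exp_sub, Real.exp_log (hz i), Real.exp_log (hy i)]
    rw [mul_comm, div_mul_cancel₀ _ (hy i).ne']
  have hub : ∀ i, y i - z i ≤ y i * δ i := by
    intro i
    have h := Real.add_one_le_exp (-δ i)
    have := hzy i
    nlinarith [hy i]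
  have hubs : ∀ i, δ i ≠ 0 → y i - z i < y i * δ i := by
    intro i hne
    have h := Real.add_one_lt_exp (neg_ne_zero.mpr hne)
    have := hzy i
    nlinarith [hy i]
  have hδi₀ : 0 < δ i₀ := sub_pos.mpr (Real.log_lt_log (hz i₀) hlt)
  -- get S for y
  obtain ⟨S, hent, hq, hker⟩ := exists_good_S V hsym y hy hρy
  have hsy : ∀ i, 0 < Real.sqrt (y i) := fun i => Real.sqrt_pos.mpr (hy i)
  have hss : ∀ i, Real.sqrt (y i) * Real.sqrt (y i) = y i :=
    fun i => Real.mul_self_sqrt (hy i).le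
  have hnnS : ∀ i j, 0 ≤ S i j := fun i j => by
    rw [hent]; exact mul_nonneg (mul_nonneg (hsy i).le (hnn i j)) (hsy j).le
  have hirrS : IsIrred S := by
    intro T hT1 hT2
    obtain ⟨i, hi, j, hj, hV⟩ := hirr T hT1 hT2
    exact ⟨i, hi, j, hj, by
      rw [hent]
      exact mul_ne_zero (mul_ne_zero (hsy i).ne' hV) (hsy j).ne'⟩
  set η : Fin k → ℝ := fun j => Real.sqrt (y j) * δ j with hη_def
  have hSη : ∀ j, (S *ᵥ η) j = Real.sqrt (y j) * ∑ i, V j i * (y i * δ i) := by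
    intro j
    simp only [Matrix.mulVec, dotProduct, hη_def, Finset.mul_sum]
    refine Finset.sum_congr rfl fun i _ => ?_
    rw [hent]
    linear_combination (Real.sqrt (y j) * V j i * δ i) * hss i
  have hδle : ∀ j, δ j ≤ ∑ i, V j i * (y i * δ i) := by
    intro j
    rw [hδ j]
    exact Finset.sum_le_sum fun i _ => mul_le_mul_of_nonneg_left (hub i) (hnn j i)
  have hineq : ∀ j, η j ≤ (S *ᵥ η) j := by
    intro j
    rw [hSη j, hη_def]
    exact mul_le_mul_of_nonneg_left (hδle j) (hsy j).le
  have hηpos : ∀ j, 0 < η j :=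
    core_perron S hnnS hirrS hq hker η hineq i₀ (mul_pos (hsy i₀) hδi₀)
  have hδpos : ∀ j, 0 < δ j := by
    intro j
    have := hηpos j
    have h2 : 0 < Real.sqrt (y j) * δ j := this
    nlinarith [hsy j]
  -- strict inequality at i₀
  have hrow : ∃ i, V i₀ i ≠ 0 := by
    by_contra hcon
    push_neg at hcon
    have hz0 : δ i₀ = 0 := by
      rw [hδ i₀]
      exact Finset.sum_eq_zero fun i _ => by rw [hcon i]; ring
    exact hδi₀.ne' hz0
  obtain ⟨i₁, hi₁⟩ := hrow
  set w : Fin k → ℝ := fun j => y j * δ j with hw_def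
  have hstrict : δ i₀ < ∑ i, V i₀ i * w i := by
    rw [hδ i₀]
    refine Finset.sum_lt_sum (fun i _ => mul_le_mul_of_nonneg_left (hub i) (hnn i₀ i))
      ⟨i₁, Finset.mem_univ i₁, ?_⟩
    exact mul_lt_mul_of_pos_left (hubs i₁ (hδpos i₁).ne')
      (lt_of_le_of_ne (hnn i₀ i₁) (Ne.symm hi₁))
  have hwpos : ∀ j, 0 < w j := fun j => mul_pos (hy j) (hδpos j)
  have hsum1 : ∑ j, w j * δ j < ∑ j, w j * (∑ i, V j i * w i) :=
    Finset.sum_lt_sum (fun j _ => mul_le_mul_of_nonneg_left (hδle j) (hwpos j).le)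
      ⟨i₀, Finset.mem_univ i₀, mul_lt_mul_of_pos_left hstrict (hwpos i₀)⟩
  have hq2 := hq η
  have e1 : η ⬝ᵥ (S *ᵥ η) = ∑ j, w j * (∑ i, V j i * w i) := by
    simp only [dotProduct]
    refine Finset.sum_congr rfl fun j _ => ?_
    rw [hSη j]
    simp only [hη_def, hw_def]
    linear_combination (δ j * (∑ i, V j i * (y i * δ i))) * hss j
  have e2 : η ⬝ᵥ η = ∑ j, w j * δ j := by
    simp only [dotProduct]
    refine Finset.sum_congr rfl fun j _ => ?_
    simp only [hη_def, hw_def]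
    linear_combination (δ j * δ j) * hss j
  rw [e1, e2] at hq2
  exact absurd hq2 (not_le.mpr hsum1)


theorem uniqueness_in_R0bar {k : ℕ} (V : Matrix (Fin k) (Fin k) ℝ)
    (hnn : ∀ i j, 0 ≤ V i j) (hsym : ∀ i j, V i j = V j i) (hirr : IsIrred V)
    (y z : Fin k → ℝ) (hy : ∀ i, 0 < y i) (hz : ∀ i, 0 < z i)
    (hρy : rho (V * Matrix.diagonal y) ≤ 1) (hρz : rho (V * Matrix.diagonal z) ≤ 1)
    (heq : ∀ j, y j * Real.exp (-(V.mulVec y j)) = z j * Real.exp (-(V.mulVec z j))) :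
    y = z := by
  by_contra hne
  obtain ⟨i₀, hi₀⟩ := Function.ne_iff.mp hne
  rcases lt_or_gt_of_ne hi₀ with h | h
  · exact key V hnn (fun i j => hsym i j) hirr z y hz hy hρz (fun j => (heq j).symm) i₀ h
  · exact key V hnn hsym hirr y z hy hz hρy heq i₀ h
end

section
/- Let V be a k×k nonnegative irreducible symmetric real matrix and z ∈ (0,∞)^k with ρ(V·D[z_j]) > 1. Then there exists a vector η ∈ (0,1)^k (all coordinates strictly between 0 and 1) such that ρ(V·D[z_j η_j]) = 1 and V·D[z_j]·(1 − η) = η^{-1} − 1, where 1 denotes the all-ones vector and η^{-1} is the vector with coordinates 1/η_i. -/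
open Matrix Finset

section Aux

variable {k : ℕ}

lemma pow_entries_nonneg (N : Matrix (Fin k) (Fin k) ℝ) (hN : ∀ i j, 0 ≤ N i j) :
    ∀ m i j, 0 ≤ (N ^ m) i j := by
  intro m
  induction m with
  | zero => intro i j; simp [Matrix.one_apply]; positivity
  | succ m ih =>
      intro i j
      rw [pow_succ, Matrix.mul_apply]
      exact Finset.sum_nonneg fun l _ => mul_nonneg (ih i l) (hN l j)

lemma exists_pos_subeig (M : Matrix (Fin k) (Fin k) ℝ) (hM : ∀ i j, 0 ≤ M i j)
    (hconn : ∀ T : Finset (Fin k), T.Nonempty → T ≠ Finset.univ →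
      ∃ j, j ∉ T ∧ ∃ i ∈ T, M j i ≠ 0)
    (r : ℝ) (y : Fin k → ℝ) (hy : ∀ i, 0 ≤ y i) (hy0 : ∃ i, 0 < y i)
    (hsub : ∀ i, r * y i ≤ ∑ j, M i j * y j) :
    ∃ v : Fin k → ℝ, (∀ i, 0 < v i) ∧ ∀ i, r * v i ≤ ∑ j, M i j * v j := by
  classical
  set N : Matrix (Fin k) (Fin k) ℝ := 1 + M with hNdef
  have hN : ∀ i j, 0 ≤ N i j := by
    intro i j
    simp only [hNdef, Matrix.add_apply, Matrix.one_apply]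
    have := hM i j; split <;> linarith
  have hNP := pow_entries_nonneg N hN
  have hNz : ∀ z : Fin k → ℝ, (∀ i, 0 ≤ z i) → ∀ i, z i ≤ N.mulVec z i := by
    intro z hz i
    rw [show N.mulVec z i = ∑ j, N i j * z j from rfl]
    have h1 : N i i * z i ≤ ∑ j, N i j * z j :=
      Finset.single_le_sum (f := fun j => N i j * z j)
        (fun j _ => mul_nonneg (hN i j) (hz j)) (Finset.mem_univ i)
    have h2 : N i i = 1 + M i i := by simp [hNdef, Matrix.add_apply, Matrix.one_apply]
    nlinarith [hM i i, hz i]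
  have hNznn : ∀ z : Fin k → ℝ, (∀ i, 0 ≤ z i) → ∀ i, 0 ≤ N.mulVec z i := by
    intro z hz i
    rw [show N.mulVec z i = ∑ j, N i j * z j from rfl]
    exact Finset.sum_nonneg fun j _ => mul_nonneg (hN i j) (hz j)
  have key : ∀ m (z : Fin k → ℝ), (∀ i, 0 ≤ z i) → (∃ i, 0 < z i) →
      min k ((Finset.univ.filter fun i => 0 < z i).card + m)
        ≤ (Finset.univ.filter fun i => 0 < (N ^ m).mulVec z i).card := by
    intro m
    induction m with
    | zero =>
        intro z hz hz0
        rw [pow_zero, Matrix.one_mulVec]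
        simp only [add_zero]
        exact min_le_right _ _
    | succ m ih =>
        intro z hz hz0
        have hrec : (N ^ (m + 1)).mulVec z = (N ^ m).mulVec (N.mulVec z) := by
          rw [pow_succ, ← Matrix.mulVec_mulVec]
        set S : Finset (Fin k) := Finset.univ.filter fun i => 0 < z i with hS
        have hSne : S.Nonempty := by
          obtain ⟨i, hi⟩ := hz0; exact ⟨i, by simp [hS, hi]⟩
        have hz' : ∀ i, 0 ≤ N.mulVec z i := hNznn z hz
        have hz'0 : ∃ i, 0 < N.mulVec z i := by
          obtain ⟨i, hi⟩ := hz0; exact ⟨i, lt_of_lt_of_le hi (hNz z hz i)⟩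
        have hsub2 : S ⊆ Finset.univ.filter fun i => 0 < N.mulVec z i := by
          intro i hi
          simp only [hS, Finset.mem_filter] at hi ⊢
          exact ⟨Finset.mem_univ i, lt_of_lt_of_le hi.2 (hNz z hz i)⟩
        rw [hrec]
        have ihz := ih (N.mulVec z) hz' hz'0
        by_cases hSuniv : S = Finset.univ
        · have hcard : k ≤ (Finset.univ.filter fun i => 0 < N.mulVec z i).card := by
            calc k = S.card := by rw [hSuniv]; simp
            _ ≤ _ := Finset.card_le_card hsub2
          omega
        · obtain ⟨j, hjS, i, hiS, hMji⟩ := hconn S hSne hSuniv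
          have hiz : 0 < z i := by simpa [hS] using hiS
          have hjpos : 0 < N.mulVec z j := by
            rw [show N.mulVec z j = ∑ l, N j l * z l from rfl]
            have h1 : N j i * z i ≤ ∑ l, N j l * z l :=
              Finset.single_le_sum (f := fun l => N j l * z l)
                (fun l _ => mul_nonneg (hN j l) (hz l)) (Finset.mem_univ i)
            have h5 : 0 < M j i := lt_of_le_of_ne (hM j i) (Ne.symm hMji)
            have h2 : N j i = (if j = i then 1 else 0) + M j i := by
              simp [hNdef, Matrix.add_apply, Matrix.one_apply]
            have h6 : 0 < N j i := by rw [h2]; split <;> linarith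
            nlinarith
          have hcard : S.card + 1 ≤ (Finset.univ.filter fun i => 0 < N.mulVec z i).card := by
            have hins : insert j S ⊆ Finset.univ.filter fun i => 0 < N.mulVec z i := by
              intro a ha
              rcases Finset.mem_insert.mp ha with h | h
              · subst h; simp [hjpos]
              · exact hsub2 h
            calc S.card + 1 = (insert j S).card := (Finset.card_insert_of_notMem hjS).symm
            _ ≤ _ := Finset.card_le_card hins
          omega
  set v : Fin k → ℝ := (N ^ k).mulVec y with hv
  obtain ⟨i0, hi0⟩ := hy0
  have hk : k ≠ 0 := fun h => Fin.elim0 (h ▸ i0)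
  have hcard := key k y hy ⟨i0, hi0⟩
  rw [← hv] at hcard
  have hone : 1 ≤ (Finset.univ.filter fun i => 0 < y i).card :=
    Finset.card_pos.mpr ⟨i0, by simp [hi0]⟩
  have hle : (Finset.univ.filter fun i => 0 < v i).card ≤ k :=
    le_trans (Finset.card_filter_le _ _) (by simp)
  have hvfull : (Finset.univ.filter fun i => 0 < v i) = Finset.univ := by
    apply Finset.eq_univ_of_card
    rw [Fintype.card_fin]
    omega
  have hvpos : ∀ i, 0 < v i := by
    intro i
    have h := Finset.eq_univ_iff_forall.mp hvfull i
    simpa using h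
  refine ⟨v, hvpos, ?_⟩
  have hcN : Commute M N := (Commute.one_right M).add_right (Commute.refl M)
  have hcomm : M * N ^ k = N ^ k * M := (hcN.pow_right k).eq
  intro i
  have h2 : M.mulVec v = (N ^ k).mulVec (M.mulVec y) := by
    rw [hv, Matrix.mulVec_mulVec, hcomm, ← Matrix.mulVec_mulVec]
  have h3 : r * v i = (N ^ k).mulVec (fun l => r * y l) i := by
    rw [hv]
    have : (fun l => r * y l) = r • y := by funext l; simp [Pi.smul_apply, smul_eq_mul]
    rw [this, Matrix.mulVec_smul]
    simp [Pi.smul_apply, smul_eq_mul]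
  rw [show (∑ j, M i j * v j) = M.mulVec v i from rfl, h2, h3]
  rw [show (N ^ k).mulVec (fun l => r * y l) i = ∑ l, (N ^ k) i l * (r * y l) from rfl,
      show (N ^ k).mulVec (M.mulVec y) i = ∑ l, (N ^ k) i l * (M.mulVec y) l from rfl]
  apply Finset.sum_le_sum
  intro l _
  have hml : r * y l ≤ M.mulVec y l := by
    rw [show M.mulVec y l = ∑ j, M l j * y j from rfl]; exact hsub l
  exact mul_le_mul_of_nonneg_left hml (hNP k i l)

lemma normSet_eq (M : Matrix (Fin k) (Fin k) ℝ) :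
    {r : ℝ | ∃ μ ∈ spectrum ℂ (M.map (algebraMap ℝ ℂ)), r = ‖μ‖}
      = (fun μ : ℂ => ‖μ‖) '' spectrum ℂ (M.map (algebraMap ℝ ℂ)) := by
  ext r
  constructor
  · rintro ⟨μ, hμ, rfl⟩; exact ⟨μ, hμ, rfl⟩
  · rintro ⟨μ, hμ, rfl⟩; exact ⟨μ, hμ, rfl⟩

lemma normSet_finite (M : Matrix (Fin k) (Fin k) ℝ) :
    ((fun μ : ℂ => ‖μ‖) '' spectrum ℂ (M.map (algebraMap ℝ ℂ))).Finite :=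
  (Matrix.finite_spectrum _).image _

lemma norm_le_rho {M : Matrix (Fin k) (Fin k) ℝ} {μ : ℂ}
    (hμ : μ ∈ spectrum ℂ (M.map (algebraMap ℝ ℂ))) : ‖μ‖ ≤ rho M := by
  rw [rho, normSet_eq]
  exact le_csSup (normSet_finite M).bddAbove ⟨μ, hμ, rfl⟩

lemma exists_norm_eq_rho (hk : k ≠ 0) (M : Matrix (Fin k) (Fin k) ℝ) :
    ∃ μ ∈ spectrum ℂ (M.map (algebraMap ℝ ℂ)), ‖μ‖ = rho M := by
  haveI : NeZero k := ⟨hk⟩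
  have hne : (spectrum ℂ (M.map (algebraMap ℝ ℂ))).Nonempty := by
    rw [← AlgEquiv.spectrum_eq Matrix.toLinAlgEquiv' (M.map (algebraMap ℝ ℂ))]
    obtain ⟨μ, hμ⟩ := Module.End.exists_eigenvalue (Matrix.toLinAlgEquiv' (M.map (algebraMap ℝ ℂ)))
    exact ⟨μ, hμ.mem_spectrum⟩
  have hmem : rho M ∈ (fun μ : ℂ => ‖μ‖) '' spectrum ℂ (M.map (algebraMap ℝ ℂ)) := by
    rw [rho, normSet_eq]
    exact Set.Nonempty.csSup_mem (hne.image _) (normSet_finite M)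
  obtain ⟨μ, hμ, h⟩ := hmem
  exact ⟨μ, hμ, h⟩

lemma mem_spec_iff_eigvec (A : Matrix (Fin k) (Fin k) ℂ) (μ : ℂ) :
    μ ∈ spectrum ℂ A ↔ ∃ u : Fin k → ℂ, u ≠ 0 ∧ A.mulVec u = μ • u := by
  rw [← AlgEquiv.spectrum_eq Matrix.toLinAlgEquiv' A,
    ← Module.End.hasEigenvalue_iff_mem_spectrum]
  constructor
  · intro h
    obtain ⟨v, hv⟩ := h.exists_hasEigenvector
    exact ⟨v, hv.2, by simpa [Matrix.toLinAlgEquiv'_apply] using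
      Module.End.mem_eigenspace_iff.mp hv.1⟩
  · rintro ⟨u, hu0, hu⟩
    exact Module.End.hasEigenvalue_of_hasEigenvector
      ⟨Module.End.mem_eigenspace_iff.mpr (by simpa [Matrix.toLinAlgEquiv'_apply] using hu), hu0⟩

lemma abs_subeig (M : Matrix (Fin k) (Fin k) ℝ) (hM : ∀ i j, 0 ≤ M i j) {μ : ℂ}
    {u : Fin k → ℂ} (hu : (M.map (algebraMap ℝ ℂ)).mulVec u = μ • u) :
    ∀ i, ‖μ‖ * ‖u i‖ ≤ ∑ j, M i j * ‖u j‖ := by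
  intro i
  have h1 : μ * u i = ∑ j, (M i j : ℂ) * u j := by
    have := congrFun hu i
    rw [show (M.map (algebraMap ℝ ℂ)).mulVec u i
        = ∑ j, (M.map (algebraMap ℝ ℂ)) i j * u j from rfl] at this
    simp only [Matrix.map_apply, Pi.smul_apply, smul_eq_mul] at this
    rw [← this]
    rfl
  calc ‖μ‖ * ‖u i‖ = ‖μ * u i‖ := (norm_mul μ (u i)).symm
    _ = ‖∑ j, (M i j : ℂ) * u j‖ := by rw [h1]
    _ ≤ ∑ j, ‖(M i j : ℂ) * u j‖ := norm_sum_le _ _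
    _ = ∑ j, M i j * ‖u j‖ := by
        apply Finset.sum_congr rfl
        intro j _
        rw [norm_mul, Complex.norm_real, Real.norm_eq_abs, abs_of_nonneg (hM i j)]

lemma rho_eq_zero_of_k_eq_zero (hk : k = 0) (M : Matrix (Fin k) (Fin k) ℝ) : rho M = 0 := by
  subst hk
  haveI : IsEmpty (Fin 0) := inferInstance
  have hempty : spectrum ℂ (M.map (algebraMap ℝ ℂ)) = ∅ :=
    Set.eq_empty_of_forall_notMem fun μ h => (spectrum.mem_iff.mp h) (isUnit_of_subsingleton _)
  rw [rho, normSet_eq, hempty]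
  simp [Real.sSup_empty]

end Aux

theorem exists_eta {k : ℕ} (V : Matrix (Fin k) (Fin k) ℝ)
    (hnn : ∀ i j, 0 ≤ V i j) (hsym : ∀ i j, V i j = V j i) (hirr : IsIrred V)
    (z : Fin k → ℝ) (hz : ∀ i, 0 < z i) (hρz : 1 < rho (V * Matrix.diagonal z)) :
    ∃ η : Fin k → ℝ, (∀ i, 0 < η i ∧ η i < 1) ∧
      rho (V * Matrix.diagonal (fun j => z j * η j)) = 1 ∧
      ∀ i, ∑ j, V i j * z j * (1 - η j) = (η i)⁻¹ - 1 := by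
  classical
  have hk : k ≠ 0 := by
    intro h
    rw [rho_eq_zero_of_k_eq_zero h] at hρz
    linarith
  haveI : NeZero k := ⟨hk⟩
  set A := V * Matrix.diagonal z with hAdef
  have hAij : ∀ i j, A i j = V i j * z j := fun i j => Matrix.mul_diagonal z V i j
  have hAnn : ∀ i j, 0 ≤ A i j := fun i j => by
    rw [hAij]; exact mul_nonneg (hnn i j) (hz j).le
  set lam := rho A with hlamdef
  have hlam : 1 < lam := hρz
  -- Perron direction for A
  obtain ⟨μ, hμspec, hμnorm⟩ := exists_norm_eq_rho hk A
  obtain ⟨u, hu0, huμ⟩ := (mem_spec_iff_eigvec _ μ).mp hμspec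
  set y : Fin k → ℝ := fun i => ‖u i‖ with hydef
  have hy : ∀ i, 0 ≤ y i := fun i => norm_nonneg _
  have hy0 : ∃ i, 0 < y i := by
    obtain ⟨i, hi⟩ := Function.ne_iff.mp hu0
    exact ⟨i, norm_pos_iff.mpr hi⟩
  have hsubA : ∀ i, lam * y i ≤ ∑ j, A i j * y j := by
    intro i
    have := abs_subeig A hAnn huμ i
    rwa [hμnorm] at this
  have hconn : ∀ T : Finset (Fin k), T.Nonempty → T ≠ Finset.univ →
      ∃ j, j ∉ T ∧ ∃ i ∈ T, A j i ≠ 0 := by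
    intro T hT1 hT2
    obtain ⟨i, hiT, j, hjT, hVij⟩ := hirr T hT1 hT2
    refine ⟨j, Finset.mem_compl.mp hjT, i, hiT, ?_⟩
    rw [hAij, hsym]
    exact mul_ne_zero hVij (hz i).ne'
  obtain ⟨v, hvpos, hvsub⟩ := exists_pos_subeig A hAnn hconn lam y hy hy0 hsubA
  -- choose ε
  set C : ℝ := 1 + ∑ i, v i with hCdef
  have hvC : ∀ i, v i ≤ C := by
    intro i
    have h1 : v i ≤ ∑ j, v j :=
      Finset.single_le_sum (fun j _ => (hvpos j).le) (Finset.mem_univ i)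
    linarith
  have hC1 : 1 ≤ C := by
    have : 0 ≤ ∑ i, v i := Finset.sum_nonneg fun i _ => (hvpos i).le
    linarith
  set ε : ℝ := (lam - 1) / (lam * C) with hεdef
  have hε : 0 < ε := by
    apply div_pos <;> nlinarith
  have hεC : ε * (lam * C) = lam - 1 := by
    rw [hεdef]
    field_simp
  have hkey : ∀ i, ε * (lam * v i) ≤ lam - 1 := by
    intro i
    rw [← hεC]
    have : ε * lam > 0 := by nlinarith
    nlinarith [hvC i]
  have hεv1 : ∀ i, ε * v i < 1 := by
    intro i
    nlinarith [hkey i, hvpos i, mul_pos hε (hvpos i)]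
  have hεv0 : ∀ i, 0 < ε * v i := fun i => mul_pos hε (hvpos i)
  -- fixed point lattice setup
  haveI : Fact ((0:ℝ) ≤ 1) := ⟨zero_le_one⟩
  set I : Set ℝ := Set.Icc (0:ℝ) 1 with hIdef
  set D : (Fin k → I) → Fin k → ℝ :=
    fun η i => 1 + ∑ j, V i j * z j * (1 - (η j : ℝ)) with hDdef
  have hD1 : ∀ η i, 1 ≤ D η i := by
    intro η i
    have : 0 ≤ ∑ j, V i j * z j * (1 - (η j : ℝ)) := by
      apply Finset.sum_nonneg
      intro j _
      have := (η j).2.2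
      have := (hz j).le
      have := hnn i j
      apply mul_nonneg (mul_nonneg (hnn i j) (hz j).le)
      linarith [(η j).2.2]
    simp only [hDdef]
    linarith
  have hDpos : ∀ η i, 0 < D η i := fun η i => lt_of_lt_of_le one_pos (hD1 η i)
  set F : (Fin k → I) → (Fin k → I) :=
    fun η i => ⟨(D η i)⁻¹, ⟨inv_nonneg.mpr (hDpos η i).le,
      inv_le_one_of_one_le₀ (hD1 η i)⟩⟩ with hFdef
  have hmono : Monotone F := by
    intro a b hab i
    have hD2 : D b i ≤ D a i := by
      simp only [hDdef]
      have : ∀ j, V i j * z j * (1 - (b j : ℝ)) ≤ V i j * z j * (1 - (a j : ℝ)) := by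
        intro j
        have h1 : (a j : ℝ) ≤ (b j : ℝ) := Subtype.coe_le_coe.mpr (hab j)
        apply mul_le_mul_of_nonneg_left _ (mul_nonneg (hnn i j) (hz j).le)
        linarith
      have hss : ∑ j, V i j * z j * (1 - (b j : ℝ))
          ≤ ∑ j, V i j * z j * (1 - (a j : ℝ)) :=
        Finset.sum_le_sum (fun j _ => this j)
      linarith
    show (⟨(D a i)⁻¹, _⟩ : I) ≤ ⟨(D b i)⁻¹, _⟩
    change (D a i)⁻¹ ≤ (D b i)⁻¹
    exact inv_anti₀ (hDpos b i) hD2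
  set Fo : (Fin k → I) →o (Fin k → I) := ⟨F, hmono⟩ with hFo
  set ηs : Fin k → I := OrderHom.lfp Fo with hηs
  have hfix : F ηs = ηs := Fo.map_lfp
  set η : Fin k → ℝ := fun i => (ηs i : ℝ) with hηdef
  have hfixi : ∀ i, η i = (D ηs i)⁻¹ := by
    intro i
    have := congrFun hfix i
    exact congrArg Subtype.val this.symm
  -- lfp ≤ b
  set b : Fin k → I := fun i => ⟨1 - ε * v i, ⟨by nlinarith [hεv1 i], by nlinarith [hεv0 i]⟩⟩
    with hbdef
  have hFb : Fo b ≤ b := by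
    intro i
    show (D b i)⁻¹ ≤ 1 - ε * v i
    have hDb : D b i = 1 + ε * ∑ j, A i j * v j := by
      simp only [hDdef, hbdef]
      rw [Finset.mul_sum]
      congr 1
      apply Finset.sum_congr rfl
      intro j _
      rw [hAij]
      ring
    have h4 : 1 + ε * (lam * v i) ≤ D b i := by
      rw [hDb]
      have := hvsub i
      nlinarith [hε]
    have h5 : (D b i)⁻¹ ≤ (1 + ε * (lam * v i))⁻¹ := by
      apply inv_anti₀ _ h4
      nlinarith [hkey i, hεv0 i]
    have h6 : (1 + ε * (lam * v i))⁻¹ ≤ 1 - ε * v i := by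
      have hp : 0 < 1 + ε * (lam * v i) := by nlinarith [hεv0 i]
      rw [← one_div, div_le_iff₀ hp]
      nlinarith [hkey i, hεv0 i]
    linarith
  have hlfp_le : ηs ≤ b := Fo.lfp_le hFb
  have hηle : ∀ i, η i ≤ 1 - ε * v i := by
    intro i
    exact Subtype.coe_le_coe.mpr (hlfp_le i)
  have hηpos : ∀ i, 0 < η i := by
    intro i
    rw [hfixi i]
    exact inv_pos.mpr (hDpos ηs i)
  have hηlt1 : ∀ i, η i < 1 := fun i => lt_of_le_of_lt (hηle i) (by nlinarith [hεv0 i])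
  have hηinv : ∀ i, (η i)⁻¹ = D ηs i := by
    intro i
    rw [hfixi i, inv_inv]
  have hsum_eq : ∀ i, ∑ j, V i j * z j * (1 - η j) = (η i)⁻¹ - 1 := by
    intro i
    rw [hηinv i]
    simp only [hDdef]
    ring
  refine ⟨η, fun i => ⟨hηpos i, hηlt1 i⟩, ?_, hsum_eq⟩
  -- spectral radius of the new matrix is 1
  set M₂ := V * Matrix.diagonal (fun j => z j * η j) with hM₂def
  have hM₂ij : ∀ i j, M₂ i j = V i j * (z j * η j) := fun i j =>
    Matrix.mul_diagonal _ V i j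
  have hM₂nn : ∀ i j, 0 ≤ M₂ i j := fun i j => by
    rw [hM₂ij]
    exact mul_nonneg (hnn i j) (mul_nonneg (hz j).le (hηpos j).le)
  set x : Fin k → ℝ := fun i => (1 - η i) * (η i)⁻¹ with hxdef
  have hxpos : ∀ i, 0 < x i := fun i =>
    mul_pos (by linarith [hηlt1 i]) (inv_pos.mpr (hηpos i))
  have hMx : ∀ i, ∑ j, M₂ i j * x j = x i := by
    intro i
    have h1 : ∑ j, M₂ i j * x j = ∑ j, V i j * z j * (1 - η j) := by
      apply Finset.sum_congr rfl
      intro j _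
      have hj : (η j) * (η j)⁻¹ = 1 := mul_inv_cancel₀ (hηpos j).ne'
      calc M₂ i j * x j = V i j * z j * (1 - η j) * ((η j) * (η j)⁻¹) := by
            rw [hM₂ij, hxdef]; ring
        _ = V i j * z j * (1 - η j) := by rw [hj, mul_one]
    rw [h1, hsum_eq i]
    show (η i)⁻¹ - 1 = (1 - η i) * (η i)⁻¹
    rw [sub_mul, one_mul, mul_inv_cancel₀ (hηpos i).ne']
  -- 1 is an eigenvalue
  have hone_mem : (1 : ℂ) ∈ spectrum ℂ (M₂.map (algebraMap ℝ ℂ)) := by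
    rw [mem_spec_iff_eigvec]
    refine ⟨fun i => (x i : ℂ), ?_, ?_⟩
    · intro h
      have := congrFun h ⟨0, Nat.pos_of_ne_zero hk⟩
      simp only [Pi.zero_apply, Complex.ofReal_eq_zero] at this
      exact (hxpos _).ne' this
    · funext i
      rw [show (M₂.map (algebraMap ℝ ℂ)).mulVec (fun i => (x i : ℂ)) i
          = ∑ j, ((M₂ i j : ℝ) : ℂ) * (x j : ℂ) from rfl]
      have : ∑ j, ((M₂ i j : ℝ) : ℂ) * (x j : ℂ) = ((∑ j, M₂ i j * x j : ℝ) : ℂ) := by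
        push_cast
        rfl
      rw [this, hMx i]
      simp
  -- upper bound on the spectrum
  set ℓ : Fin k → ℝ := fun i => z i * (1 - η i) with hℓdef
  have hℓpos : ∀ i, 0 < ℓ i := fun i => mul_pos (hz i) (by linarith [hηlt1 i])
  have hleft : ∀ j, ∑ i, ℓ i * M₂ i j = ℓ j := by
    intro j
    have h1 : ∑ i, ℓ i * M₂ i j = (z j * η j) * ∑ i, V j i * z i * (1 - η i) := by
      rw [Finset.mul_sum]
      apply Finset.sum_congr rfl
      intro i _
      rw [hℓdef, hM₂ij, hsym i j]
      ring
    rw [h1, hsum_eq j]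
    show z j * η j * ((η j)⁻¹ - 1) = z j * (1 - η j)
    have hj : (η j) * (η j)⁻¹ = 1 := mul_inv_cancel₀ (hηpos j).ne'
    calc z j * η j * ((η j)⁻¹ - 1) = z j * ((η j) * (η j)⁻¹) - z j * η j := by ring
      _ = z j * (1 - η j) := by rw [hj]; ring
  have hbound : ∀ r ∈ {r : ℝ | ∃ μ ∈ spectrum ℂ (M₂.map (algebraMap ℝ ℂ)), r = ‖μ‖},
      r ≤ 1 := by
    rintro r ⟨μ₂, hμ₂, rfl⟩
    obtain ⟨w, hw0, hwμ⟩ := (mem_spec_iff_eigvec _ μ₂).mp hμ₂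
    set yw : Fin k → ℝ := fun i => ‖w i‖ with hywdef
    have hyw : ∀ i, 0 ≤ yw i := fun i => norm_nonneg _
    have hyw0 : ∃ i, 0 < yw i := by
      obtain ⟨i, hi⟩ := Function.ne_iff.mp hw0
      exact ⟨i, norm_pos_iff.mpr hi⟩
    have habs := abs_subeig M₂ hM₂nn hwμ
    have hchain : ‖μ₂‖ * ∑ j, ℓ j * yw j ≤ ∑ j, ℓ j * yw j := by
      have e1 : ‖μ₂‖ * ∑ j, ℓ j * yw j = ∑ j, ℓ j * (‖μ₂‖ * yw j) := by
        rw [Finset.mul_sum]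
        apply Finset.sum_congr rfl
        intro j _
        ring
      have e2 : ∑ j, ℓ j * (‖μ₂‖ * yw j) ≤ ∑ j, ℓ j * (∑ i, M₂ j i * yw i) := by
        apply Finset.sum_le_sum
        intro j _
        exact mul_le_mul_of_nonneg_left (habs j) (hℓpos j).le
      have e3 : ∑ j, ℓ j * (∑ i, M₂ j i * yw i) = ∑ i, (∑ j, ℓ j * M₂ j i) * yw i := by
        simp_rw [Finset.mul_sum, Finset.sum_mul]
        rw [Finset.sum_comm]
        apply Finset.sum_congr rfl
        intro i _
        apply Finset.sum_congr rfl
        intro j _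
        ring
      have e4 : ∑ i, (∑ j, ℓ j * M₂ j i) * yw i = ∑ i, ℓ i * yw i := by
        apply Finset.sum_congr rfl
        intro i _
        rw [hleft i]
      rw [e1]
      calc ∑ j, ℓ j * (‖μ₂‖ * yw j) ≤ ∑ j, ℓ j * (∑ i, M₂ j i * yw i) := e2
        _ = ∑ i, (∑ j, ℓ j * M₂ j i) * yw i := e3
        _ = ∑ i, ℓ i * yw i := e4
    have hspos : 0 < ∑ j, ℓ j * yw j := by
      obtain ⟨i, hi⟩ := hyw0
      apply Finset.sum_pos'
      · intro j _
        exact mul_nonneg (hℓpos j).le (hyw j)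
      · exact ⟨i, Finset.mem_univ i, mul_pos (hℓpos i) hi⟩
    nlinarith
  apply le_antisymm
  · exact Real.sSup_le hbound zero_le_one
  · have := norm_le_rho hone_mem
    rwa [norm_one] at this
end

section
/- Let V be a k×k nonnegative irreducible symmetric real matrix and z ∈ (0,∞)^k with ρ(V·D[z_j]) > 1. Then there exists a unique y ∈ (0,∞)^k with ρ(V·D[y_j]) < 1 satisfying y_j·exp(-(V y)_j) = z_j·exp(-(V z)_j) for all j; moreover y_i < z_i for all i. -/
open Matrix


theorem LE.spectrum_map_herm {k : ℕ} (A : Matrix (Fin k) (Fin k) ℝ) (hA : A.IsHermitian) :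
    spectrum ℂ (A.map (algebraMap ℝ ℂ)) = Set.range (fun i => (hA.eigenvalues i : ℂ)) := by
  set U : Matrix (Fin k) (Fin k) ℝ := (hA.eigenvectorUnitary : Matrix (Fin k) (Fin k) ℝ) with hU
  have hUU : U * star U = 1 := Matrix.mem_unitaryGroup_iff.mp (hA.eigenvectorUnitary).2
  have hUU' : star U * U = 1 := Matrix.mem_unitaryGroup_iff'.mp (hA.eigenvectorUnitary).2
  set f := algebraMap ℝ ℂ with hf
  have hmul : ∀ M N : Matrix (Fin k) (Fin k) ℝ, (M * N).map f = M.map f * N.map f := by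
    intro M N; exact Matrix.map_mul
  have hone : (1 : Matrix (Fin k) (Fin k) ℝ).map f = 1 := Matrix.map_one f (map_zero f) (map_one f)
  set u : (Matrix (Fin k) (Fin k) ℂ)ˣ :=
    { val := U.map f, inv := (star U).map f,
      val_inv := by rw [← hmul, hUU, hone],
      inv_val := by rw [← hmul, hUU', hone] } with hu
  have key : A.map f = (↑u : Matrix (Fin k) (Fin k) ℂ) *
      (Matrix.diagonal (fun i => (hA.eigenvalues i : ℂ))) * (↑u⁻¹ : Matrix (Fin k) (Fin k) ℂ) := by
    have h2 := congrArg (fun M : Matrix (Fin k) (Fin k) ℝ => M.map ⇑f) hA.spectral_theorem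
    simp only [Unitary.conjStarAlgAut_apply] at h2
    rw [h2, hmul, hmul]
    congr 1
    congr 1
    rw [Matrix.diagonal_map (map_zero f)]
    congr 1
  rw [key, spectrum.units_conjugate, spectrum_diagonal]

theorem LE.quad_le_lamMax {k : ℕ} (A : Matrix (Fin k) (Fin k) ℝ) (hA : A.IsHermitian)
    (hne : (Finset.univ : Finset (Fin k)).Nonempty) (x : Fin k → ℝ) :
    x ⬝ᵥ A *ᵥ x ≤ (Finset.univ.sup' hne hA.eigenvalues) * (x ⬝ᵥ x) := by
  set lam := Finset.univ.sup' hne hA.eigenvalues with hlam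
  set U : Matrix (Fin k) (Fin k) ℝ := (hA.eigenvectorUnitary : Matrix (Fin k) (Fin k) ℝ) with hU
  have hUU : U * star U = 1 := Matrix.mem_unitaryGroup_iff.mp (hA.eigenvectorUnitary).2
  set D : Matrix (Fin k) (Fin k) ℝ := Matrix.diagonal (RCLike.ofReal ∘ hA.eigenvalues) with hD
  set w : Fin k → ℝ := star U *ᵥ x with hw
  have hstar : star U = Uᵀ := by
    rw [Matrix.star_eq_conjTranspose]
    ext i j
    simp [Matrix.conjTranspose_apply]
  have h2 : ∀ y : Fin k → ℝ, x ⬝ᵥ (U *ᵥ y) = w ⬝ᵥ y := by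
    intro y
    rw [Matrix.dotProduct_mulVec, hw, hstar]
    rw [← Matrix.transpose_transpose U, Matrix.vecMul_transpose, Matrix.transpose_transpose]
  have h1 : x ⬝ᵥ A *ᵥ x = w ⬝ᵥ (D *ᵥ w) := by
    conv_lhs => rw [show A *ᵥ x = U *ᵥ (D *ᵥ (star U *ᵥ x)) by
      rw [Matrix.mulVec_mulVec, Matrix.mulVec_mulVec]
      have hs := hA.spectral_theorem
      rw [Unitary.conjStarAlgAut_apply] at hs
      exact congrArg (· *ᵥ x) hs]
    rw [h2]
  have hww : w ⬝ᵥ w = x ⬝ᵥ x := by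
    rw [hw]
    nth_rewrite 1 [← h2]
    rw [Matrix.mulVec_mulVec, hUU, Matrix.one_mulVec]
  rw [h1, ← hww]
  have hDw : D *ᵥ w = fun i => hA.eigenvalues i * w i := by
    funext i
    simp [hD, Matrix.mulVec_diagonal]
  rw [hDw]
  simp only [dotProduct, Finset.mul_sum]
  apply Finset.sum_le_sum
  intro i _
  have h3 : hA.eigenvalues i ≤ lam := Finset.le_sup' _ (Finset.mem_univ i)
  have h4 : 0 ≤ w i * w i := mul_self_nonneg _
  calc w i * (hA.eigenvalues i * w i) = hA.eigenvalues i * (w i * w i) := by ring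
    _ ≤ lam * (w i * w i) := by nlinarith

theorem LE.eigvec_facts {k : ℕ} (A : Matrix (Fin k) (Fin k) ℝ) (hA : A.IsHermitian) (i : Fin k) :
    A *ᵥ ⇑(hA.eigenvectorBasis i) = hA.eigenvalues i • ⇑(hA.eigenvectorBasis i) ∧
      (⇑(hA.eigenvectorBasis i) ⬝ᵥ ⇑(hA.eigenvectorBasis i)) = 1 := by
  constructor
  · exact hA.mulVec_eigenvectorBasis i
  · have h := (hA.eigenvectorBasis).orthonormal.1 i
    have h2 : @inner ℝ _ _ (hA.eigenvectorBasis i) (hA.eigenvectorBasis i) = 1 := by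
      rw [real_inner_self_eq_norm_sq, h]; norm_num
    rw [← h2, PiLp.inner_apply]
    simp [dotProduct, pow_two]

theorem LE.abs_quad_le {k : ℕ} (A : Matrix (Fin k) (Fin k) ℝ) (hnn : ∀ i j, 0 ≤ A i j)
    (v : Fin k → ℝ) : |v ⬝ᵥ A *ᵥ v| ≤ (fun i => |v i|) ⬝ᵥ A *ᵥ (fun i => |v i|) := by
  simp only [dotProduct, Matrix.mulVec, dotProduct]
  calc |∑ i, v i * ∑ j, A i j * v j| ≤ ∑ i, |v i * ∑ j, A i j * v j| :=
        Finset.abs_sum_le_sum_abs _ _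
    _ ≤ ∑ i, |v i| * ∑ j, A i j * |v j| := by
        apply Finset.sum_le_sum
        intro i _
        rw [abs_mul]
        apply mul_le_mul_of_nonneg_left _ (abs_nonneg _)
        calc |∑ j, A i j * v j| ≤ ∑ j, |A i j * v j| := Finset.abs_sum_le_sum_abs _ _
          _ ≤ ∑ j, A i j * |v j| := by
              apply Finset.sum_le_sum
              intro j _
              rw [abs_mul, abs_of_nonneg (hnn i j)]
    _ = ∑ i, |v i| * ∑ j, A i j * |v j| := rfl

theorem LE.dotProduct_abs_self {k : ℕ} (v : Fin k → ℝ) :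
    (fun i => |v i|) ⬝ᵥ (fun i => |v i|) = v ⬝ᵥ v := by
  simp only [dotProduct]
  congr 1
  funext i
  rw [← abs_mul, abs_mul_self]

theorem LE.abs_eig_le_lamMax {k : ℕ} (A : Matrix (Fin k) (Fin k) ℝ) (hA : A.IsHermitian)
    (hnn : ∀ i j, 0 ≤ A i j) (hne : (Finset.univ : Finset (Fin k)).Nonempty) (i : Fin k) :
    |hA.eigenvalues i| ≤ Finset.univ.sup' hne hA.eigenvalues := by
  obtain ⟨heig, hunit⟩ := LE.eigvec_facts A hA i
  set v : Fin k → ℝ := ⇑(hA.eigenvectorBasis i) with hv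
  have hquad : v ⬝ᵥ A *ᵥ v = hA.eigenvalues i := by
    rw [heig, dotProduct_smul, smul_eq_mul, hunit]; ring
  have h1 : |hA.eigenvalues i| ≤ (fun j => |v j|) ⬝ᵥ A *ᵥ (fun j => |v j|) := by
    rw [← hquad]; exact LE.abs_quad_le A hnn v
  calc |hA.eigenvalues i| ≤ (fun j => |v j|) ⬝ᵥ A *ᵥ (fun j => |v j|) := h1
    _ ≤ Finset.univ.sup' hne hA.eigenvalues * ((fun j => |v j|) ⬝ᵥ (fun j => |v j|)) :=
        LE.quad_le_lamMax A hA hne _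
    _ = Finset.univ.sup' hne hA.eigenvalues := by rw [LE.dotProduct_abs_self, hunit, mul_one]

theorem LE.rho_eq_lamMax {k : ℕ} (A : Matrix (Fin k) (Fin k) ℝ) (hA : A.IsHermitian)
    (hnn : ∀ i j, 0 ≤ A i j) (hne : (Finset.univ : Finset (Fin k)).Nonempty) :
    rho A = Finset.univ.sup' hne hA.eigenvalues := by
  set lam := Finset.univ.sup' hne hA.eigenvalues with hlam
  have hset : {r : ℝ | ∃ μ ∈ spectrum ℂ (A.map (algebraMap ℝ ℂ)), r = ‖μ‖}
      = Set.range (fun i => |hA.eigenvalues i|) := by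
    rw [LE.spectrum_map_herm A hA]
    ext r
    simp only [Set.mem_setOf_eq, Set.mem_range]
    constructor
    · rintro ⟨μ, ⟨i, rfl⟩, rfl⟩
      exact ⟨i, by rw [Complex.norm_real, Real.norm_eq_abs]⟩
    · rintro ⟨i, rfl⟩
      exact ⟨(hA.eigenvalues i : ℂ), ⟨i, rfl⟩, by rw [Complex.norm_real, Real.norm_eq_abs]⟩
  have hgreat : IsGreatest {r : ℝ | ∃ μ ∈ spectrum ℂ (A.map (algebraMap ℝ ℂ)), r = ‖μ‖} lam := by
    rw [hset]
    constructor
    · obtain ⟨i₀, -, hi₀⟩ := Finset.exists_mem_eq_sup' hne hA.eigenvalues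
      refine ⟨i₀, ?_⟩
      have h1 : |hA.eigenvalues i₀| ≤ lam := LE.abs_eig_le_lamMax A hA hnn hne i₀
      have h2 : lam = hA.eigenvalues i₀ := hi₀
      have h3 : hA.eigenvalues i₀ ≤ |hA.eigenvalues i₀| := le_abs_self _
      linarith [abs_nonneg (hA.eigenvalues i₀)]
    · rintro r ⟨i, rfl⟩
      exact LE.abs_eig_le_lamMax A hA hnn hne i
  exact hgreat.csSup_eq

theorem LE.exists_nonneg_eigvec {k : ℕ} (A : Matrix (Fin k) (Fin k) ℝ) (hA : A.IsHermitian)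
    (hnn : ∀ i j, 0 ≤ A i j) (hne : (Finset.univ : Finset (Fin k)).Nonempty) :
    ∃ x : Fin k → ℝ, (∀ i, 0 ≤ x i) ∧ x ⬝ᵥ x = 1 ∧
      A *ᵥ x = (Finset.univ.sup' hne hA.eigenvalues) • x := by
  set lam := Finset.univ.sup' hne hA.eigenvalues with hlam
  obtain ⟨i₀, -, hi₀⟩ := Finset.exists_mem_eq_sup' hne hA.eigenvalues
  obtain ⟨heig, hunit⟩ := LE.eigvec_facts A hA i₀
  set v : Fin k → ℝ := ⇑(hA.eigenvectorBasis i₀) with hv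
  set x : Fin k → ℝ := fun i => |v i| with hx
  have hxx : x ⬝ᵥ x = 1 := by rw [hx, LE.dotProduct_abs_self, hunit]
  have hquadv : v ⬝ᵥ A *ᵥ v = lam := by
    rw [heig, dotProduct_smul, smul_eq_mul, hunit, hi₀.symm]; ring
  have hquadx : x ⬝ᵥ A *ᵥ x = lam := by
    have h1 : lam ≤ x ⬝ᵥ A *ᵥ x := by
      calc lam = v ⬝ᵥ A *ᵥ v := hquadv.symm
        _ ≤ |v ⬝ᵥ A *ᵥ v| := le_abs_self _
        _ ≤ x ⬝ᵥ A *ᵥ x := LE.abs_quad_le A hnn v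
    have h2 : x ⬝ᵥ A *ᵥ x ≤ lam * (x ⬝ᵥ x) := LE.quad_le_lamMax A hA hne x
    rw [hxx, mul_one] at h2
    linarith
  set M : Matrix (Fin k) (Fin k) ℝ := lam • (1 : Matrix (Fin k) (Fin k) ℝ) - A with hM
  have hMherm : M.IsHermitian := by
    apply Matrix.IsHermitian.sub _ hA
    unfold Matrix.IsHermitian
    ext i j
    simp [Matrix.conjTranspose_apply, Matrix.one_apply, eq_comm]
  have hMpsd : M.PosSemidef := by
    refine Matrix.PosSemidef.of_dotProduct_mulVec_nonneg hMherm fun y => ?_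
    have h2 : y ⬝ᵥ A *ᵥ y ≤ lam * (y ⬝ᵥ y) := LE.quad_le_lamMax A hA hne y
    have h3 : M *ᵥ y = lam • y - A *ᵥ y := by
      rw [hM, Matrix.sub_mulVec, Matrix.smul_mulVec, Matrix.one_mulVec]
    rw [star_trivial, h3, dotProduct_sub, dotProduct_smul, smul_eq_mul]
    linarith
  have hMx : x ⬝ᵥ M *ᵥ x = 0 := by
    have h3 : M *ᵥ x = lam • x - A *ᵥ x := by
      rw [hM, Matrix.sub_mulVec, Matrix.smul_mulVec, Matrix.one_mulVec]
    rw [h3, dotProduct_sub, dotProduct_smul, smul_eq_mul, hxx, hquadx]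
    ring
  have hMx0 : M *ᵥ x = 0 :=
    (hMpsd.dotProduct_mulVec_zero_iff x).mp (by rw [star_trivial]; exact hMx)
  refine ⟨x, fun i => abs_nonneg _, hxx, ?_⟩
  have h5 : lam • x - A *ᵥ x = 0 := by
    rw [← hMx0, hM, Matrix.sub_mulVec, Matrix.smul_mulVec, Matrix.one_mulVec]
  exact (sub_eq_zero.mp h5).symm

theorem LE.perron_pos {k : ℕ} (A : Matrix (Fin k) (Fin k) ℝ) (hsym : ∀ i j, A i j = A j i)
    (hnn : ∀ i j, 0 ≤ A i j) (hirr : IsIrred A) (lam : ℝ)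
    (x : Fin k → ℝ) (hx : ∀ i, 0 ≤ x i) (hxx : x ⬝ᵥ x = 1) (heig : A *ᵥ x = lam • x) :
    ∀ i, 0 < x i := by
  set S : Finset (Fin k) := Finset.univ.filter (fun i => x i ≠ 0) with hS
  have hSne : S.Nonempty := by
    by_contra hemp
    rw [Finset.not_nonempty_iff_eq_empty] at hemp
    have h0 : x ⬝ᵥ x = 0 := by
      simp only [dotProduct]
      apply Finset.sum_eq_zero
      intro i _
      have hxi : x i = 0 := by
        by_contra hne0
        have hmem : i ∈ S := by simp [hS, hne0]
        rw [hemp] at hmem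
        exact absurd hmem (Finset.notMem_empty i)
      rw [hxi]; ring
    rw [hxx] at h0; norm_num at h0
  have hSuniv : S = Finset.univ := by
    by_contra hne
    obtain ⟨i, hiS, j, hjS, hAij⟩ := hirr S hSne hne
    have hxj : x j = 0 := by
      by_contra h0
      have hmem : j ∈ S := by simp [hS, h0]
      rw [Finset.mem_compl] at hjS
      exact hjS hmem
    have hAxj : (A *ᵥ x) j = 0 := by rw [heig]; simp [hxj]
    have hterms : ∀ l ∈ Finset.univ, 0 ≤ A j l * x l :=
      fun l _ => mul_nonneg (hnn j l) (hx l)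
    have hzero : ∀ l ∈ Finset.univ, A j l * x l = 0 := by
      apply (Finset.sum_eq_zero_iff_of_nonneg hterms).mp
      simpa [Matrix.mulVec, dotProduct] using hAxj
    have hxi : x i ≠ 0 := by
      have h6 := hiS
      simp [hS] at h6
      exact h6
    have h7 := hzero i (Finset.mem_univ i)
    rw [hsym j i] at h7
    rcases mul_eq_zero.mp h7 with h | h
    · exact hAij h
    · exact hxi h
  intro i
  have hmem : i ∈ S := hSuniv ▸ Finset.mem_univ i
  simp only [hS, Finset.mem_filter] at hmem
  exact lt_of_le_of_ne (hx i) (Ne.symm hmem.2)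

theorem LE.rho_conj {k : ℕ} (V : Matrix (Fin k) (Fin k) ℝ) (y : Fin k → ℝ) (hy : ∀ i, 0 < y i) :
    rho (V * Matrix.diagonal y) =
      rho (Matrix.diagonal (fun i => Real.sqrt (y i)) * V *
        Matrix.diagonal (fun i => Real.sqrt (y i))) := by
  set s : Fin k → ℝ := fun i => Real.sqrt (y i) with hs
  have hspos : ∀ i, 0 < s i := fun i => Real.sqrt_pos.mpr (hy i)
  set f := algebraMap ℝ ℂ with hf
  have hmul : ∀ M N : Matrix (Fin k) (Fin k) ℝ, (M * N).map f = M.map f * N.map f :=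
    fun M N => Matrix.map_mul
  have hone : (1 : Matrix (Fin k) (Fin k) ℝ).map f = 1 := Matrix.map_one f (map_zero f) (map_one f)
  have hdinv : Matrix.diagonal s * Matrix.diagonal (fun i => (s i)⁻¹) = 1 := by
    rw [Matrix.diagonal_mul_diagonal]
    rw [show (fun i => s i * (s i)⁻¹) = fun _ => (1:ℝ) by
      funext i; exact mul_inv_cancel₀ (ne_of_gt (hspos i))]
    exact Matrix.diagonal_one
  have hdinv' : Matrix.diagonal (fun i => (s i)⁻¹) * Matrix.diagonal s = 1 := by
    rw [Matrix.diagonal_mul_diagonal]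
    rw [show (fun i => (s i)⁻¹ * s i) = fun _ => (1:ℝ) by
      funext i; exact inv_mul_cancel₀ (ne_of_gt (hspos i))]
    exact Matrix.diagonal_one
  set u : (Matrix (Fin k) (Fin k) ℂ)ˣ :=
    { val := (Matrix.diagonal s).map f, inv := (Matrix.diagonal (fun i => (s i)⁻¹)).map f,
      val_inv := by rw [← hmul, hdinv, hone],
      inv_val := by rw [← hmul, hdinv', hone] } with hu
  have key : (V * Matrix.diagonal y).map f = (↑u⁻¹ : Matrix (Fin k) (Fin k) ℂ) *
      ((Matrix.diagonal s * V * Matrix.diagonal s).map f) * (↑u : Matrix (Fin k) (Fin k) ℂ) := by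
    have h1 : (↑u⁻¹ : Matrix (Fin k) (Fin k) ℂ) = (Matrix.diagonal (fun i => (s i)⁻¹)).map f := rfl
    rw [h1, ← hmul, ← hmul]
    have h3 : Matrix.diagonal (fun i => (s i)⁻¹) * (Matrix.diagonal s * V * Matrix.diagonal s) *
        Matrix.diagonal s = V * Matrix.diagonal y := by
      rw [show Matrix.diagonal (fun i => (s i)⁻¹) * (Matrix.diagonal s * V * Matrix.diagonal s)
          = (Matrix.diagonal (fun i => (s i)⁻¹) * Matrix.diagonal s) * (V * Matrix.diagonal s) by
        noncomm_ring]
      rw [hdinv', one_mul, mul_assoc, Matrix.diagonal_mul_diagonal]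
      congr 1
      rw [show (fun i => s i * s i) = y from funext fun i => Real.mul_self_sqrt (hy i).le]
    rw [h3]
  unfold rho
  congr 1
  rw [key, spectrum.units_conjugate']


noncomputable def Bmat {k : ℕ} (V : Matrix (Fin k) (Fin k) ℝ) (y : Fin k → ℝ) :
    Matrix (Fin k) (Fin k) ℝ :=
  Matrix.diagonal (fun i => Real.sqrt (y i)) * V * Matrix.diagonal (fun i => Real.sqrt (y i))

theorem Bmat_apply {k : ℕ} (V : Matrix (Fin k) (Fin k) ℝ) (y : Fin k → ℝ) (i j : Fin k) :
    Bmat V y i j = Real.sqrt (y i) * V i j * Real.sqrt (y j) := by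
  unfold Bmat
  rw [Matrix.mul_diagonal, Matrix.diagonal_mul]

theorem Bmat_herm {k : ℕ} (V : Matrix (Fin k) (Fin k) ℝ) (hsym : ∀ i j, V i j = V j i)
    (y : Fin k → ℝ) : (Bmat V y).IsHermitian := by
  unfold Matrix.IsHermitian
  ext i j
  rw [Matrix.conjTranspose_apply, Bmat_apply, Bmat_apply, star_trivial, hsym j i]
  ring

theorem Bmat_nn {k : ℕ} (V : Matrix (Fin k) (Fin k) ℝ) (hnn : ∀ i j, 0 ≤ V i j)
    (y : Fin k → ℝ) (i j : Fin k) : 0 ≤ Bmat V y i j := by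
  rw [Bmat_apply]
  exact mul_nonneg (mul_nonneg (Real.sqrt_nonneg _) (hnn i j)) (Real.sqrt_nonneg _)

theorem Bmat_mulVec {k : ℕ} (V : Matrix (Fin k) (Fin k) ℝ) (y : Fin k → ℝ) (x : Fin k → ℝ)
    (j : Fin k) :
    (Bmat V y *ᵥ x) j = Real.sqrt (y j) * (V.mulVec (fun l => Real.sqrt (y l) * x l)) j := by
  unfold Bmat
  rw [← Matrix.mulVec_mulVec, ← Matrix.mulVec_mulVec]
  rw [show (Matrix.diagonal (fun i => Real.sqrt (y i)) *ᵥ x) = fun l => Real.sqrt (y l) * x l by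
    funext l; rw [Matrix.mulVec_diagonal]]
  rw [Matrix.mulVec_diagonal]


noncomputable def Gmap {k : ℕ} (V : Matrix (Fin k) (Fin k) ℝ) (c : Fin k → ℝ)
    (y : Fin k → ℝ) : Fin k → ℝ := fun j => c j * Real.exp (V.mulVec y j)

theorem LE.mulVec_mono {k : ℕ} (V : Matrix (Fin k) (Fin k) ℝ) (hnn : ∀ i j, 0 ≤ V i j)
    (a b : Fin k → ℝ) (hab : ∀ i, a i ≤ b i) (j : Fin k) : V.mulVec a j ≤ V.mulVec b j := by
  simp only [Matrix.mulVec, dotProduct]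
  exact Finset.sum_le_sum fun l _ => mul_le_mul_of_nonneg_left (hab l) (hnn j l)

theorem LE.mulVec_nonneg {k : ℕ} (V : Matrix (Fin k) (Fin k) ℝ) (hnn : ∀ i j, 0 ≤ V i j)
    (a : Fin k → ℝ) (ha : ∀ i, 0 ≤ a i) (j : Fin k) : 0 ≤ V.mulVec a j := by
  simp only [Matrix.mulVec, dotProduct]
  exact Finset.sum_nonneg fun l _ => mul_nonneg (hnn j l) (ha l)

theorem LE.Gmap_mono {k : ℕ} (V : Matrix (Fin k) (Fin k) ℝ) (hnn : ∀ i j, 0 ≤ V i j)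
    (c : Fin k → ℝ) (hc : ∀ j, 0 < c j) (a b : Fin k → ℝ) (hab : ∀ i, a i ≤ b i) (j : Fin k) :
    Gmap V c a j ≤ Gmap V c b j := by
  unfold Gmap
  exact mul_le_mul_of_nonneg_left
    (Real.exp_le_exp.mpr (LE.mulVec_mono V hnn a b hab j)) (hc j).le

theorem LE.Gmap_pos {k : ℕ} (V : Matrix (Fin k) (Fin k) ℝ) (c : Fin k → ℝ) (hc : ∀ j, 0 < c j)
    (a : Fin k → ℝ) (j : Fin k) : 0 < Gmap V c a j :=
  mul_pos (hc j) (Real.exp_pos _)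

theorem LE.exists_min_fixed {k : ℕ} (V : Matrix (Fin k) (Fin k) ℝ) (hnn : ∀ i j, 0 ≤ V i j)
    (c : Fin k → ℝ) (hc : ∀ j, 0 < c j) (w₀ : Fin k → ℝ) (hw₀pos : ∀ j, 0 < w₀ j)
    (hfix : ∀ j, Gmap V c w₀ j = w₀ j) :
    ∃ Y : Fin k → ℝ, (∀ j, 0 < Y j) ∧ (∀ j, Gmap V c Y j = Y j) ∧
      (∀ w : Fin k → ℝ, (∀ j, 0 ≤ w j) → (∀ j, Gmap V c w j ≤ w j) → ∀ j, Y j ≤ w j) := by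
  set g := Gmap V c with hg
  have hgmono := LE.Gmap_mono V hnn c hc
  have hgpos := LE.Gmap_pos V c hc
  set seq : ℕ → Fin k → ℝ := fun n => g^[n] (fun _ => 0) with hseq
  have hssucc : ∀ n, seq (n + 1) = g (seq n) := fun n => Function.iterate_succ_apply' g n _
  have hsle : ∀ w : Fin k → ℝ, (∀ j, 0 ≤ w j) → (∀ j, g w j ≤ w j) → ∀ n j, seq n j ≤ w j := by
    intro w hw hgw n
    induction n with
    | zero => intro j; exact hw j
    | succ n ih => intro j; rw [hssucc]; exact le_trans (hgmono _ _ ih j) (hgw j)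
  have hw₀sub : ∀ j, g w₀ j ≤ w₀ j := fun j => le_of_eq (hfix j)
  have hbdd : ∀ j, BddAbove (Set.range fun n => seq n j) := by
    intro j
    refine ⟨w₀ j, ?_⟩
    rintro r ⟨n, rfl⟩
    exact hsle w₀ (fun l => (hw₀pos l).le) hw₀sub n j
  have hstep : ∀ n j, seq n j ≤ seq (n + 1) j := by
    intro n
    induction n with
    | zero => intro j; rw [hssucc]; exact (hgpos _ j).le
    | succ n ih =>
        intro j
        rw [hssucc, hssucc]
        exact hgmono _ _ ih j
  have hmono : ∀ j, Monotone fun n => seq n j := fun j =>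
    monotone_nat_of_le_succ fun n => hstep n j
  set Y : Fin k → ℝ := fun j => ⨆ n, seq n j with hY
  have htend : ∀ j, Filter.Tendsto (fun n => seq n j) Filter.atTop (nhds (Y j)) := fun j =>
    tendsto_atTop_ciSup (hmono j) (hbdd j)
  have hYfix : ∀ j, g Y j = Y j := by
    intro j
    have h1 : Filter.Tendsto (fun n => V.mulVec (seq n) j) Filter.atTop
        (nhds (V.mulVec Y j)) := by
      simp only [Matrix.mulVec, dotProduct]
      exact tendsto_finset_sum _ fun l _ => (htend l).const_mul (V j l)
    have h2 : Filter.Tendsto (fun n => g (seq n) j) Filter.atTop (nhds (g Y j)) := by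
      have h2' := ((Real.continuous_exp.tendsto _).comp h1).const_mul (c j)
      exact h2'
    have h3 : Filter.Tendsto (fun n => g (seq n) j) Filter.atTop (nhds (Y j)) := by
      have h3' := (htend j).comp (Filter.tendsto_add_atTop_nat 1)
      have h4 : (fun n => seq (n + 1) j) = fun n => g (seq n) j := by
        funext n; rw [hssucc]
      rw [show ((fun n => seq n j) ∘ (· + 1)) = fun n => seq (n + 1) j from rfl, h4] at h3'
      exact h3'
    exact tendsto_nhds_unique h2 h3
  have hYpos : ∀ j, 0 < Y j := by
    intro j
    have h5 : seq 1 j ≤ Y j := le_ciSup (hbdd j) 1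
    have h6 : 0 < seq 1 j := by rw [hssucc]; exact hgpos _ j
    linarith
  exact ⟨Y, hYpos, hYfix, fun w hw hgw j => ciSup_le fun n => hsle w hw hgw n j⟩


theorem LE.rho_zero_dim (M : Matrix (Fin 0) (Fin 0) ℝ) : rho M = 0 := by
  haveI : Subsingleton (Matrix (Fin 0) (Fin 0) ℂ) := by
    constructor; intro a b; ext i j; exact absurd i.2 (by omega)
  have hemp : spectrum ℂ (M.map (algebraMap ℝ ℂ)) = ∅ := by
    ext μ
    simp only [Set.mem_empty_iff_false, iff_false]
    intro h
    exact (spectrum.mem_iff.mp h) (isUnit_of_subsingleton _)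
  unfold rho
  rw [show {r : ℝ | ∃ μ ∈ spectrum ℂ (M.map (algebraMap ℝ ℂ)), r = ‖μ‖} = (∅ : Set ℝ) by
    rw [hemp]; simp]
  exact Real.sSup_empty


theorem LE.rho_eq_lam_Bmat {k : ℕ} (V : Matrix (Fin k) (Fin k) ℝ) (hnn : ∀ i j, 0 ≤ V i j)
    (hsym : ∀ i j, V i j = V j i) (hne : (Finset.univ : Finset (Fin k)).Nonempty)
    (y : Fin k → ℝ) (hy : ∀ i, 0 < y i) :
    rho (V * Matrix.diagonal y) = Finset.univ.sup' hne (Bmat_herm V hsym y).eigenvalues := by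
  rw [LE.rho_conj V y hy]
  exact LE.rho_eq_lamMax (Bmat V y) (Bmat_herm V hsym y) (Bmat_nn V hnn y) hne

theorem LE.rho_quad {k : ℕ} (V : Matrix (Fin k) (Fin k) ℝ) (hnn : ∀ i j, 0 ≤ V i j)
    (hsym : ∀ i j, V i j = V j i) (hne : (Finset.univ : Finset (Fin k)).Nonempty)
    (y : Fin k → ℝ) (hy : ∀ i, 0 < y i) (x : Fin k → ℝ) :
    x ⬝ᵥ (Bmat V y) *ᵥ x ≤ rho (V * Matrix.diagonal y) * (x ⬝ᵥ x) := by
  rw [LE.rho_eq_lam_Bmat V hnn hsym hne y hy]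
  exact LE.quad_le_lamMax (Bmat V y) (Bmat_herm V hsym y) hne x

theorem LE.rho_eigvec {k : ℕ} (V : Matrix (Fin k) (Fin k) ℝ) (hnn : ∀ i j, 0 ≤ V i j)
    (hsym : ∀ i j, V i j = V j i) (hne : (Finset.univ : Finset (Fin k)).Nonempty)
    (y : Fin k → ℝ) (hy : ∀ i, 0 < y i) :
    ∃ x : Fin k → ℝ, (∀ i, 0 ≤ x i) ∧ x ⬝ᵥ x = 1 ∧
      (Bmat V y) *ᵥ x = rho (V * Matrix.diagonal y) • x := by
  obtain ⟨x, h1, h2, h3⟩ :=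
    LE.exists_nonneg_eigvec (Bmat V y) (Bmat_herm V hsym y) (Bmat_nn V hnn y) hne
  refine ⟨x, h1, h2, ?_⟩
  rw [LE.rho_eq_lam_Bmat V hnn hsym hne y hy]
  exact h3

theorem LE.exp_bound (L s : ℝ) (hL : 1 < L) (hs : 0 ≤ s) (hsle : L * s ≤ L - 1) :
    Real.exp (-(L * s)) ≤ 1 - s := by
  have h1 : L * s + 1 ≤ Real.exp (L * s) := Real.add_one_le_exp _
  have hexp : 0 < Real.exp (L * s) := Real.exp_pos _
  have hs1 : s ≤ 1 := by nlinarith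
  have h2 : 1 ≤ (1 - s) * Real.exp (L * s) := by nlinarith
  rw [Real.exp_neg]
  calc (Real.exp (L * s))⁻¹ = 1 * (Real.exp (L * s))⁻¹ := (one_mul _).symm
    _ ≤ ((1 - s) * Real.exp (L * s)) * (Real.exp (L * s))⁻¹ :=
        mul_le_mul_of_nonneg_right h2 (inv_nonneg.mpr hexp.le)
    _ = 1 - s := by field_simp

theorem LE.helper1 (r Yj xj e : ℝ) (hr : r ≠ 0) (hrr : r * r = Yj) :
    Yj - e * (r * xj) = (1 - e * (xj / r)) * Yj := by
  subst hrr; field_simp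
theorem LE.helper2 (r a xj t : ℝ) (hr : r ≠ 0) (hrr : r * r = a) :
    xj / r * (a * t) = r * xj * t := by
  subst hrr; field_simp
theorem LE.helper3 (r a t hj : ℝ) (hr : 0 < r) (hrr : r * r = a) (h : hj ≤ a * t) :
    hj / r ≤ r * t := by
  subst hrr
  rw [div_le_iff₀ hr]
  calc hj ≤ r * r * t := h
    _ = r * t * r := by ring

theorem unique_min_solution_in_R0 {k : ℕ} (V : Matrix (Fin k) (Fin k) ℝ)
    (hnn : ∀ i j, 0 ≤ V i j) (hsym : ∀ i j, V i j = V j i) (hirr : IsIrred V)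
    (z : Fin k → ℝ) (hz : ∀ i, 0 < z i) (hρz : 1 < rho (V * Matrix.diagonal z)) :
    (∃! y : Fin k → ℝ, (∀ i, 0 < y i) ∧ rho (V * Matrix.diagonal y) < 1 ∧
        ∀ j, y j * Real.exp (-(V.mulVec y j)) = z j * Real.exp (-(V.mulVec z j))) ∧
      ∀ y : Fin k → ℝ, ((∀ i, 0 < y i) ∧ rho (V * Matrix.diagonal y) < 1 ∧
        ∀ j, y j * Real.exp (-(V.mulVec y j)) = z j * Real.exp (-(V.mulVec z j))) →
        ∀ i, y i < z i := by
  rcases Nat.eq_zero_or_pos k with hk0 | hk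
  · subst hk0
    rw [LE.rho_zero_dim] at hρz
    linarith
  haveI hnemp : Nonempty (Fin k) := Fin.pos_iff_nonempty.mp hk
  have hne : (Finset.univ : Finset (Fin k)).Nonempty := Finset.univ_nonempty
  set c : Fin k → ℝ := fun j => z j * Real.exp (-(V.mulVec z j)) with hcdef
  have hc : ∀ j, 0 < c j := fun j => mul_pos (hz j) (Real.exp_pos _)
  have hgz : ∀ j, Gmap V c z j = z j := by
    intro j
    show c j * Real.exp (V.mulVec z j) = z j
    show z j * Real.exp (-(V.mulVec z j)) * Real.exp (V.mulVec z j) = z j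
    rw [Real.exp_neg]
    field_simp
  obtain ⟨Y, hYpos, hYfix, hYmin⟩ := LE.exists_min_fixed V hnn c hc z hz hgz
  have hYfix' : ∀ j, Y j = c j * Real.exp (V.mulVec Y j) := fun j => (hYfix j).symm
  have hYlez : ∀ j, Y j ≤ z j := hYmin z (fun j => (hz j).le) (fun j => (hgz j).le)
  set L := rho (V * Matrix.diagonal Y) with hL
  have hsY : ∀ j, 0 < Real.sqrt (Y j) := fun j => Real.sqrt_pos.mpr (hYpos j)
  have hsqY : ∀ j, Real.sqrt (Y j) * Real.sqrt (Y j) = Y j :=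
    fun j => Real.mul_self_sqrt (hYpos j).le
  -- Step A : L ≤ 1
  have hstepA : L ≤ 1 := by
    by_contra hgt
    push_neg at hgt
    obtain ⟨x, hx0, hxx, heig⟩ := LE.rho_eigvec V hnn hsym hne Y hYpos
    rw [← hL] at heig
    have hLpos : (0:ℝ) < L := by linarith
    set u : Fin k → ℝ := fun j => Real.sqrt (Y j) * x j with hu
    have hVu : ∀ j, V.mulVec u j = L * x j / Real.sqrt (Y j) := by
      intro j
      have h2 := congrFun heig j
      rw [Bmat_mulVec] at h2
      have h3 : Real.sqrt (Y j) * V.mulVec u j = L * x j := by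
        simpa [hu, Pi.smul_apply, smul_eq_mul] using h2
      rw [eq_div_iff (hsY j).ne']
      linarith [h3, mul_comm (V.mulVec u j) (Real.sqrt (Y j))]
    set m : ℝ := Finset.univ.inf' hne (fun j => Real.sqrt (Y j)) with hm
    have hmpos : 0 < m := by
      obtain ⟨j₀, -, hj⟩ := Finset.exists_mem_eq_inf' hne (fun j => Real.sqrt (Y j))
      rw [hm, hj]; exact hsY j₀
    have hmle : ∀ j, m ≤ Real.sqrt (Y j) := fun j => Finset.inf'_le _ (Finset.mem_univ j)
    set X : ℝ := Finset.univ.sup' hne x with hX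
    have hXle : ∀ j, x j ≤ X := fun j => Finset.le_sup' _ (Finset.mem_univ j)
    have hX0 : 0 ≤ X := by
      obtain ⟨j₀⟩ := hnemp
      exact le_trans (hx0 j₀) (hXle j₀)
    set ε : ℝ := (L - 1) / L * m / (X + 1) with hε
    have hεpos : 0 < ε :=
      div_pos (mul_pos (div_pos (by linarith) hLpos) hmpos) (by linarith)
    -- bound on s_j := ε * x j / sqrt (Y j)
    have hsj0 : ∀ j, 0 ≤ ε * (x j / Real.sqrt (Y j)) := fun j =>
      mul_nonneg hεpos.le (div_nonneg (hx0 j) (hsY j).le)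
    have hsjle : ∀ j, L * (ε * (x j / Real.sqrt (Y j))) ≤ L - 1 := by
      intro j
      have h1 : ε * (x j / Real.sqrt (Y j)) ≤ ε * X / m := by
        rw [mul_div_assoc] at *
        have h1a : ε * (x j / Real.sqrt (Y j)) ≤ ε * (X / m) := by
          apply mul_le_mul_of_nonneg_left _ hεpos.le
          apply div_le_div₀ hX0 (hXle j) hmpos (hmle j)
        linarith [h1a]
      have h2 : ε * X / m = (L - 1) / L * (X / (X + 1)) := by
        rw [hε]
        field_simp
      have h3 : X / (X + 1) ≤ 1 := by
        rw [div_le_one (by linarith)]; linarith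
      have h4 : (L - 1) / L * (X / (X + 1)) ≤ (L - 1) / L :=
        mul_le_mul_of_nonneg_left h3 (div_nonneg (by linarith) hLpos.le) |>.trans_eq (mul_one _)
      have h5 : ε * (x j / Real.sqrt (Y j)) ≤ (L - 1) / L := by
        calc ε * (x j / Real.sqrt (Y j)) ≤ ε * X / m := h1
          _ = (L - 1) / L * (X / (X + 1)) := h2
          _ ≤ (L - 1) / L := h4
      calc L * (ε * (x j / Real.sqrt (Y j))) ≤ L * ((L - 1) / L) :=
            mul_le_mul_of_nonneg_left h5 hLpos.le
        _ = L - 1 := by field_simp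
    set w : Fin k → ℝ := fun j => Y j - ε * u j with hw
    have hwid : ∀ j, w j = (1 - ε * (x j / Real.sqrt (Y j))) * Y j := by
      intro j
      show Y j - ε * (Real.sqrt (Y j) * x j) = _
      exact LE.helper1 (Real.sqrt (Y j)) (Y j) (x j) ε (hsY j).ne' (hsqY j)
    have hw0 : ∀ j, 0 ≤ w j := by
      intro j
      rw [hwid j]
      apply mul_nonneg _ (hYpos j).le
      have := hsjle j
      have := hsj0 j
      nlinarith
    have hwsub : ∀ j, Gmap V c w j ≤ w j := by
      intro j
      have hVw : V.mulVec w j = V.mulVec Y j - ε * V.mulVec u j := by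
        have hwfun : w = Y - ε • u := by
          funext l; simp [hw, smul_eq_mul]
        rw [hwfun, Matrix.mulVec_sub, Matrix.mulVec_smul]
        simp [smul_eq_mul]
      have hgw : Gmap V c w j = Y j * Real.exp (-(ε * V.mulVec u j)) := by
        show c j * Real.exp (V.mulVec w j) = _
        rw [hVw, sub_eq_add_neg, Real.exp_add, ← mul_assoc, ← hYfix' j]
      rw [hgw, hwid j]
      have harg : ε * V.mulVec u j = L * (ε * (x j / Real.sqrt (Y j))) := by
        rw [hVu j]; field_simp
      rw [harg]
      have hexpb := LE.exp_bound L (ε * (x j / Real.sqrt (Y j))) hgt (hsj0 j) (hsjle j)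
      calc Y j * Real.exp (-(L * (ε * (x j / Real.sqrt (Y j)))))
          ≤ Y j * (1 - ε * (x j / Real.sqrt (Y j))) :=
            mul_le_mul_of_nonneg_left hexpb (hYpos j).le
        _ = (1 - ε * (x j / Real.sqrt (Y j))) * Y j := by ring
    have hYw := hYmin w hw0 hwsub
    have hx00 : ∀ j, x j = 0 := by
      intro j
      have h6 : Y j ≤ Y j - ε * u j := hYw j
      have h7 : ε * u j ≤ 0 := by linarith
      have h8 : 0 ≤ u j := mul_nonneg (hsY j).le (hx0 j)
      have h9 : u j = 0 := by nlinarith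
      have h10 : Real.sqrt (Y j) * x j = 0 := h9
      rcases mul_eq_zero.mp h10 with h | h
      · exact absurd h (hsY j).ne'
      · exact h
    have : x ⬝ᵥ x = 0 := by
      simp only [dotProduct]
      apply Finset.sum_eq_zero
      intro i _
      rw [hx00 i]; ring
    rw [hxx] at this
    norm_num at this
  -- Step B/C : Y < z
  have hstepC : ∀ i, Y i < z i := by
    have hYnez : Y ≠ z := by
      intro hYz
      rw [hL, hYz] at hstepA
      linarith
    intro i
    rcases lt_or_ge (Y i) (z i) with h | hge
    · exact h
    exfalso
    have hYi : Y i = z i := le_antisymm (hYlez i) hge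
    set S : Finset (Fin k) := Finset.univ.filter (fun l => Y l = z l) with hS
    have hSne : S.Nonempty := ⟨i, by simp [hS, hYi]⟩
    have hSuniv : S ≠ Finset.univ := by
      intro hSu
      apply hYnez
      funext l
      have : l ∈ S := hSu ▸ Finset.mem_univ l
      simpa [hS] using this
    obtain ⟨a, haS, b, hbS, hVab⟩ := hirr S hSne hSuniv
    have hYa : Y a = z a := by simpa [hS] using haS
    have hYb : Y b < z b := by
      rw [Finset.mem_compl] at hbS
      have : ¬ (Y b = z b) := by simpa [hS] using hbS
      exact lt_of_le_of_ne (hYlez b) this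
    have hVeq : V.mulVec Y a = V.mulVec z a := by
      have h1 : c a * Real.exp (V.mulVec Y a) = c a * Real.exp (V.mulVec z a) := by
        rw [← hYfix' a]
        have h2 := hgz a
        show Y a = c a * Real.exp (V.mulVec z a)
        rw [hYa]
        exact h2.symm
      have h3 := mul_left_cancel₀ (hc a).ne' h1
      exact Real.exp_eq_exp.mp h3
    have hsum : ∑ l, V a l * (z l - Y l) = 0 := by
      have h1 : V.mulVec z a - V.mulVec Y a = 0 := by rw [hVeq]; ring
      rw [← h1]
      simp only [Matrix.mulVec, dotProduct]
      rw [← Finset.sum_sub_distrib]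
      congr 1
      funext l
      ring
    have hterms : ∀ l ∈ Finset.univ, 0 ≤ V a l * (z l - Y l) :=
      fun l _ => mul_nonneg (hnn a l) (by linarith [hYlez l])
    have hzero := (Finset.sum_eq_zero_iff_of_nonneg hterms).mp hsum b (Finset.mem_univ b)
    rcases mul_eq_zero.mp hzero with h | h
    · exact hVab h
    · linarith
  -- Step D : L < 1
  have hstepD : L < 1 := by
    rcases lt_or_ge L 1 with h | hge
    · exact h
    have hLeq : L = 1 := le_antisymm hstepA hge
    exfalso
    obtain ⟨x, hx0, hxx, heig⟩ := LE.rho_eigvec V hnn hsym hne Y hYpos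
    rw [← hL, hLeq, one_smul] at heig
    have hirrB : IsIrred (Bmat V Y) := by
      intro S h1 h2
      obtain ⟨a, ha, b, hb, hV⟩ := hirr S h1 h2
      exact ⟨a, ha, b, hb, by
        rw [Bmat_apply]
        exact mul_ne_zero (mul_ne_zero (hsY a).ne' hV) (hsY b).ne'⟩
    have hBsym : ∀ a b, Bmat V Y a b = Bmat V Y b a := by
      intro a b
      rw [Bmat_apply, Bmat_apply, hsym a b]
      ring
    have hxpos : ∀ j, 0 < x j := by
      apply LE.perron_pos (Bmat V Y) hBsym (fun a b => by
        rw [Bmat_apply]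
        exact mul_nonneg (mul_nonneg (hsY a).le (hnn a b)) (hsY b).le) hirrB 1 x hx0 hxx
      rw [one_smul]
      exact heig
    set h : Fin k → ℝ := z - Y with hh
    have hhpos : ∀ j, 0 < h j := fun j => by
      simp only [hh, Pi.sub_apply]
      linarith [hstepC j]
    have hVhd : ∀ j, V.mulVec h j = V.mulVec z j - V.mulVec Y j := by
      intro j
      rw [hh, Matrix.mulVec_sub]
      simp
    have hVh0 : ∀ j, 0 ≤ V.mulVec h j :=
      LE.mulVec_nonneg V hnn h (fun j => (hhpos j).le)
    have hid : ∀ j, h j = Y j * (Real.exp (V.mulVec h j) - 1) := by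
      intro j
      have e1 : V.mulVec z j = V.mulVec Y j + V.mulVec h j := by
        rw [hVhd]; ring
      have e2 : z j = c j * Real.exp (V.mulVec z j) := (hgz j).symm
      calc h j = z j - Y j := by simp [hh]
        _ = c j * Real.exp (V.mulVec z j) - c j * Real.exp (V.mulVec Y j) := by
            rw [← e2, ← hYfix' j]
        _ = c j * Real.exp (V.mulVec Y j) * (Real.exp (V.mulVec h j) - 1) := by
            rw [e1, Real.exp_add]; ring
        _ = Y j * (Real.exp (V.mulVec h j) - 1) := by rw [← hYfix' j]
    set u : Fin k → ℝ := fun j => Real.sqrt (Y j) * x j with hu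
    set v : Fin k → ℝ := fun j => x j / Real.sqrt (Y j) with hv
    have hvpos : ∀ j, 0 < v j := fun j => div_pos (hxpos j) (hsY j)
    have hVu : ∀ j, V.mulVec u j = v j := by
      intro j
      have h2 := congrFun heig j
      rw [Bmat_mulVec] at h2
      have h3 : Real.sqrt (Y j) * V.mulVec u j = x j := by
        simpa [hu] using h2
      show V.mulVec u j = x j / Real.sqrt (Y j)
      rw [eq_div_iff (hsY j).ne']
      linarith [h3, mul_comm (V.mulVec u j) (Real.sqrt (Y j))]
    have hVT : Vᵀ = V := by
      ext a b
      exact hsym b a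
    have key1 : ∑ j, u j * V.mulVec h j = ∑ j, v j * h j := by
      have e3 : ∑ j, u j * V.mulVec h j = u ⬝ᵥ (V *ᵥ h) := rfl
      rw [e3, Matrix.dotProduct_mulVec]
      have e4 : u ᵥ* V = V *ᵥ u := by
        nth_rewrite 1 [← hVT]
        exact Matrix.vecMul_transpose V u
      rw [e4]
      simp only [dotProduct]
      congr 1
      funext j
      rw [hVu j]
    have hterm : ∀ j, v j * (Y j * V.mulVec h j) = u j * V.mulVec h j := by
      intro j
      show x j / Real.sqrt (Y j) * (Y j * V.mulVec h j) = Real.sqrt (Y j) * x j * V.mulVec h j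
      exact LE.helper2 (Real.sqrt (Y j)) (Y j) (x j) (V.mulVec h j) (hsY j).ne' (hsqY j)
    have hle : ∀ j, Y j * V.mulVec h j ≤ h j := by
      intro j
      rw [hid j]
      apply mul_le_mul_of_nonneg_left _ (hYpos j).le
      have := Real.add_one_le_exp (V.mulVec h j)
      linarith
    have hexists : ∃ j₀, 0 < V.mulVec h j₀ := by
      by_contra hno
      push_neg at hno
      have hall : ∀ j, V.mulVec h j = 0 := fun j => le_antisymm (hno j) (hVh0 j)
      obtain ⟨j₀⟩ := hnemp
      have := hid j₀
      rw [hall j₀] at this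
      simp at this
      exact absurd this (hhpos j₀).ne'
    obtain ⟨j₀, hj₀⟩ := hexists
    have hstrict : v j₀ * (Y j₀ * V.mulVec h j₀) < v j₀ * h j₀ := by
      apply mul_lt_mul_of_pos_left _ (hvpos j₀)
      rw [hid j₀]
      apply mul_lt_mul_of_pos_left _ (hYpos j₀)
      have := Real.add_one_lt_exp (x := V.mulVec h j₀) hj₀.ne'
      linarith
    have hlt : ∑ j, v j * (Y j * V.mulVec h j) < ∑ j, v j * h j := by
      apply Finset.sum_lt_sum (fun j _ => ?_) ⟨j₀, Finset.mem_univ j₀, hstrict⟩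
      exact mul_le_mul_of_nonneg_left (hle j) (hvpos j).le
    have heq' : ∑ j, v j * (Y j * V.mulVec h j) = ∑ j, v j * h j := by
      rw [show ∑ j, v j * (Y j * V.mulVec h j) = ∑ j, u j * V.mulVec h j from
        Finset.sum_congr rfl fun j _ => hterm j]
      exact key1
    rw [heq'] at hlt
    exact lt_irrefl _ hlt
  -- equation satisfied by Y
  have heqY : ∀ j, Y j * Real.exp (-(V.mulVec Y j)) = z j * Real.exp (-(V.mulVec z j)) := by
    intro j
    show Y j * Real.exp (-(V.mulVec Y j)) = c j
    rw [hYfix' j, Real.exp_neg]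
    field_simp
  -- Step E : uniqueness
  have hstepE : ∀ y : Fin k → ℝ, ((∀ i, 0 < y i) ∧ rho (V * Matrix.diagonal y) < 1 ∧
      ∀ j, y j * Real.exp (-(V.mulVec y j)) = z j * Real.exp (-(V.mulVec z j))) → y = Y := by
    rintro y ⟨hy, hρy, heq⟩
    have hsy : ∀ j, 0 < Real.sqrt (y j) := fun j => Real.sqrt_pos.mpr (hy j)
    have hsqy : ∀ j, Real.sqrt (y j) * Real.sqrt (y j) = y j :=
      fun j => Real.mul_self_sqrt (hy j).le
    have hcy : ∀ j, y j * Real.exp (-(V.mulVec y j)) = c j := fun j => heq j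
    have hgy : ∀ j, Gmap V c y j = y j := by
      intro j
      show c j * Real.exp (V.mulVec y j) = y j
      rw [← hcy j, Real.exp_neg]
      field_simp
    have hYley : ∀ j, Y j ≤ y j := hYmin y (fun j => (hy j).le) (fun j => (hgy j).le)
    set h : Fin k → ℝ := y - Y with hh
    have hh0 : ∀ j, 0 ≤ h j := fun j => by
      simp only [hh, Pi.sub_apply]
      linarith [hYley j]
    have hVhd : ∀ j, V.mulVec h j = V.mulVec y j - V.mulVec Y j := by
      intro j
      rw [hh, Matrix.mulVec_sub]
      simp
    have hhle : ∀ j, h j ≤ y j * V.mulVec h j := by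
      intro j
      have e1 : V.mulVec Y j = V.mulVec y j + -(V.mulVec h j) := by rw [hVhd]; ring
      have e2 : Y j = y j * Real.exp (-(V.mulVec h j)) := by
        rw [hYfix' j, e1, Real.exp_add, ← mul_assoc]
        congr 1
        exact (hgy j)
      have e3 : h j = y j * (1 - Real.exp (-(V.mulVec h j))) := by
        have : h j = y j - Y j := by simp [hh]
        rw [this, e2]; ring
      rw [e3]
      apply mul_le_mul_of_nonneg_left _ (hy j).le
      have := Real.add_one_le_exp (-(V.mulVec h j))
      linarith
    set w : Fin k → ℝ := fun j => h j / Real.sqrt (y j) with hw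
    have hw0 : ∀ j, 0 ≤ w j := fun j => div_nonneg (hh0 j) (hsy j).le
    have hBw : ∀ j, (Bmat V y *ᵥ w) j = Real.sqrt (y j) * V.mulVec h j := by
      intro j
      rw [Bmat_mulVec]
      congr 2
      funext l
      show Real.sqrt (y l) * (h l / Real.sqrt (y l)) = h l
      rw [mul_comm]
      exact div_mul_cancel₀ _ (hsy l).ne'
    have hwle : ∀ j, w j ≤ (Bmat V y *ᵥ w) j := by
      intro j
      rw [hBw j]
      show h j / Real.sqrt (y j) ≤ _
      exact LE.helper3 (Real.sqrt (y j)) (y j) (V.mulVec h j) (h j) (hsy j) (hsqy j) (hhle j)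
    have hq1 : w ⬝ᵥ w ≤ w ⬝ᵥ (Bmat V y *ᵥ w) := by
      simp only [dotProduct]
      exact Finset.sum_le_sum fun j _ => mul_le_mul_of_nonneg_left (hwle j) (hw0 j)
    have hq2 := LE.rho_quad V hnn hsym hne y hy w
    have hww0 : 0 ≤ w ⬝ᵥ w := by
      simp only [dotProduct]
      exact Finset.sum_nonneg fun j _ => mul_self_nonneg _
    have hww : w ⬝ᵥ w = 0 := by nlinarith
    have hwz : ∀ j, w j = 0 := by
      have := (Finset.sum_eq_zero_iff_of_nonneg
        (fun j (_ : j ∈ Finset.univ) => mul_self_nonneg (w j))).mp hww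
      intro j
      exact mul_self_eq_zero.mp (this j (Finset.mem_univ j))
    funext j
    have h1 : h j = 0 := by
      have := hwz j
      rw [hw] at this
      rcases div_eq_zero_iff.mp this with h | h
      · exact h
      · exact absurd h (hsy j).ne'
    have : y j - Y j = 0 := by simpa [hh] using h1
    linarith
  constructor
  · exact ⟨Y, ⟨hYpos, hL ▸ hstepD, heqY⟩, hstepE⟩
  · intro y hy i
    rw [hstepE y hy]
    exact hstepC i
end

section
/- For all integers n ≥ 1, the n-th one-dimensional spanning-tree numbers T_n = n^{n−2} satisfy T_n·(n−1) = (1/2)·Σ_{m=1}^{n−1} (n choose m)·m·(n−m)·T_m·T_{n−m}. -/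
open Finset Polynomial
open scoped fwdDiff

lemma fwdDiff_pow_eq_zero : ∀ j n : ℕ, j < n →
    (Δ_[1])^[n] (fun k : ℕ => (k : ℝ) ^ j) = 0 := by
  intro j
  induction j using Nat.strong_induction_on with
  | _ j IH =>
    intro n hn
    obtain ⟨m, rfl⟩ : ∃ m, n = m + 1 := ⟨n - 1, by omega⟩
    rw [Function.iterate_succ_apply]
    have hdiff : Δ_[1] (fun k : ℕ => (k : ℝ) ^ j)
        = ∑ i ∈ range j, (j.choose i : ℝ) • (fun k : ℕ => (k : ℝ) ^ i) := by
      funext k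
      have hb : ((k : ℝ) + 1) ^ j = ∑ i ∈ range (j+1), (k:ℝ)^i * 1^(j-i) * j.choose i :=
        add_pow _ _ _
      have hb2 : ((k : ℝ) + 1) ^ j = (∑ i ∈ range j, (j.choose i : ℝ) * (k:ℝ)^i) + (k:ℝ)^j := by
        rw [hb, Finset.sum_range_succ]
        simp only [one_pow, Nat.choose_self, Nat.cast_one, mul_one]
        congr 1
        exact Finset.sum_congr rfl fun i _ => by ring
      simp only [fwdDiff, Finset.sum_apply, Pi.smul_apply, smul_eq_mul]
      push_cast
      rw [hb2]
      ring
    rw [hdiff, fwdDiff_iter_finset_sum]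
    refine Finset.sum_eq_zero fun i hi => ?_
    have hij := mem_range.mp hi
    rw [fwdDiff_iter_const_smul, IH i hij m (by omega)]
    simp

lemma alt_sum_pow (j n : ℕ) (hjn : j < n) :
    ∑ k ∈ range (n+1), (-1:ℝ)^(n-k) * (n.choose k : ℝ) * ((1:ℝ)+k)^j = 0 := by
  have hf : (fun k : ℕ => ((1:ℝ)+k)^j)
      = ∑ i ∈ range (j+1), (j.choose i : ℝ) • (fun k : ℕ => (k : ℝ) ^ i) := by
    funext k
    have hb : ((k : ℝ) + 1) ^ j = ∑ i ∈ range (j+1), (k:ℝ)^i * 1^(j-i) * j.choose i :=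
      add_pow _ _ _
    simp only [Finset.sum_apply, Pi.smul_apply, smul_eq_mul]
    rw [add_comm (1:ℝ) (k:ℝ), hb]
    exact Finset.sum_congr rfl fun i _ => by ring
  have hzero : (Δ_[1])^[n] (fun k : ℕ => ((1:ℝ)+k)^j) = 0 := by
    rw [hf, fwdDiff_iter_finset_sum]
    refine Finset.sum_eq_zero fun i hi => ?_
    have hij := mem_range.mp hi
    rw [fwdDiff_iter_const_smul, fwdDiff_pow_eq_zero i n (by omega)]
    simp
  have := fwdDiff_iter_eq_sum_shift (1:ℕ) (fun k : ℕ => ((1:ℝ)+k)^j) n 0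
  rw [hzero] at this
  simp only [Pi.zero_apply, smul_eq_mul, zero_add, smul_eq_mul, mul_one] at this
  rw [eq_comm] at this
  rw [← this]
  refine Finset.sum_congr rfl fun k _ => ?_
  rw [zsmul_eq_mul]
  push_cast
  ring

open Polynomial in
lemma Gpoly : ∀ n : ℕ, ∀ c : ℝ,
    (∑ k ∈ range (n+1), C ((n.choose k : ℝ) * ((1:ℝ)+k)^(k-1)) *
      (X + C (((n-k : ℕ) : ℝ) + c)) ^ (n-k))
    = (X + C (((n:ℕ):ℝ)+1+c))^n := by
  intro n
  induction n with
  | zero => intro c; simp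
  | succ n IH =>
    intro c
    set L : ℝ[X] := ∑ k ∈ range (n+2), C (((n+1).choose k : ℝ) * ((1:ℝ)+k)^(k-1)) *
      (X + C ((((n+1)-k : ℕ) : ℝ) + c)) ^ ((n+1)-k) with hL
    set R : ℝ[X] := (X + C ((((n+1):ℕ):ℝ)+1+c))^(n+1) with hR
    have h1 : derivative L = C ((n:ℝ)+1) * (X + C (((n:ℕ):ℝ)+1+(c+1)))^n := by
      rw [hL, derivative_sum]
      calc ∑ k ∈ range (n+2), derivative
              (C (((n+1).choose k : ℝ) * ((1:ℝ)+k)^(k-1)) *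
                (X + C ((((n+1)-k : ℕ) : ℝ) + c)) ^ ((n+1)-k))
          = ∑ k ∈ range (n+2), C ((((n+1)-k : ℕ):ℝ) * ((n+1).choose k : ℝ) * ((1:ℝ)+k)^(k-1)) *
              (X + C ((((n+1)-k : ℕ) : ℝ) + c)) ^ ((n+1)-k-1) := by
            refine Finset.sum_congr rfl fun k _ => ?_
            rw [derivative_mul, derivative_C, derivative_pow, derivative_X_add_C]
            ring_nf
            simp only [← Polynomial.C_mul]
            ring_nf
        _ = ∑ k ∈ range (n+1), C (((n:ℝ)+1) * ((n.choose k : ℝ) * ((1:ℝ)+k)^(k-1))) *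
              (X + C (((n-k : ℕ) : ℝ) + (c+1))) ^ (n-k) := by
            rw [Finset.sum_range_succ]
            simp only [Nat.sub_self, Nat.cast_zero, zero_mul, Polynomial.C_0, zero_mul, add_zero]
            refine Finset.sum_congr rfl fun k hk => ?_
            have hk' : k ≤ n := by have := mem_range.mp hk; omega
            have hch : ((n+1) - k) * ((n+1).choose k) = (n+1) * (n.choose k) := by
              rw [mul_comm, ← Nat.choose_mul_succ_eq, mul_comm]
            have hcast : ((((n+1)-k : ℕ):ℝ)) * (((n+1).choose k : ℝ))
                = ((n:ℝ)+1) * (n.choose k : ℝ) := by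
              have := congrArg (fun t : ℕ => (t : ℝ)) hch
              push_cast at this
              convert this using 2 <;> push_cast <;> ring
            have he : (n+1) - k - 1 = n - k := by omega
            have hb : ((((n+1)-k : ℕ) : ℝ) + c) = (((n-k : ℕ) : ℝ) + (c+1)) := by
              have h1 : ((n+1) - k : ℕ) = (n - k) + 1 := by omega
              rw [h1]; push_cast; ring
            rw [he, hb]
            congr 1
            congr 1
            linear_combination ((1:ℝ)+(k:ℝ))^(k-1) * hcast
        _ = C ((n:ℝ)+1) * ∑ k ∈ range (n+1), C ((n.choose k : ℝ) * ((1:ℝ)+k)^(k-1)) *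
              (X + C (((n-k : ℕ) : ℝ) + (c+1))) ^ (n-k) := by
            rw [Finset.mul_sum]
            refine Finset.sum_congr rfl fun k _ => ?_
            rw [Polynomial.C_mul]; ring
        _ = C ((n:ℝ)+1) * (X + C (((n:ℕ):ℝ)+1+(c+1)))^n := by rw [IH (c+1)]
    have h2 : derivative R = C ((n:ℝ)+1) * (X + C (((n:ℕ):ℝ)+1+(c+1)))^n := by
      rw [hR, derivative_pow, derivative_X_add_C]
      rw [Nat.add_sub_cancel, mul_one]
      congr 1
      · push_cast; ring_nf
      · congr 1
        push_cast; ring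
    have hd0 : derivative (L - R) = 0 := by rw [derivative_sub, h1, h2, sub_self]
    have hdeg : (L - R).natDegree = 0 := natDegree_eq_zero_of_derivative_eq_zero hd0
    have hCform := Polynomial.eq_C_of_natDegree_eq_zero hdeg
    set y₀ : ℝ := -((n:ℝ)+2+c) with hy₀
    have hevalL : L.eval y₀ = 0 := by
      rw [hL, Polynomial.eval_finset_sum]
      have key : ∀ k ∈ range (n+2),
          (C (((n+1).choose k : ℝ) * ((1:ℝ)+k)^(k-1)) *
            (X + C ((((n+1)-k : ℕ) : ℝ) + c)) ^ ((n+1)-k)).eval y₀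
          = (-1:ℝ)^((n+1)-k) * (((n+1).choose k : ℝ)) * ((1:ℝ)+k)^n := by
        intro k hk
        have hk' : k ≤ n + 1 := by have := mem_range.mp hk; omega
        have hb : y₀ + ((((n+1)-k : ℕ) : ℝ) + c) = -((1:ℝ)+k) := by
          rw [hy₀, Nat.cast_sub hk']
          push_cast; ring
        simp only [Polynomial.eval_mul, Polynomial.eval_pow, Polynomial.eval_add,
          Polynomial.eval_X, Polynomial.eval_C]
        rw [hb]
        have hpow : ((1:ℝ)+k)^(k-1) * ((1:ℝ)+k)^((n+1)-k) = ((1:ℝ)+k)^n := by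
          rcases Nat.eq_zero_or_pos k with hk0 | hk1
          · subst hk0; norm_num
          · rw [← pow_add]
            congr 1
            omega
        rw [neg_pow]
        calc ((n+1).choose k : ℝ) * ((1:ℝ)+k)^(k-1) * ((-1:ℝ)^((n+1)-k) * ((1:ℝ)+k)^((n+1)-k))
            = (-1:ℝ)^((n+1)-k) * (((n+1).choose k : ℝ))
                * (((1:ℝ)+k)^(k-1) * ((1:ℝ)+k)^((n+1)-k)) := by ring
          _ = (-1:ℝ)^((n+1)-k) * (((n+1).choose k : ℝ)) * ((1:ℝ)+k)^n := by rw [hpow]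
      rw [Finset.sum_congr rfl key]
      exact alt_sum_pow n (n+1) (by omega)
    have hevalR : R.eval y₀ = 0 := by
      rw [hR]
      simp only [Polynomial.eval_pow, Polynomial.eval_add, Polynomial.eval_X, Polynomial.eval_C,
        hy₀]
      rw [show -((n:ℝ)+2+c) + ((((n+1):ℕ):ℝ)+1+c) = 0 by push_cast; ring]
      simp
    have hc0 : (L - R).coeff 0 = 0 := by
      have := congrArg (Polynomial.eval y₀) hCform
      rw [Polynomial.eval_sub, hevalL, hevalR, Polynomial.eval_C] at this
      linarith [this]
    have hLR : L - R = 0 := by rw [hCform, hc0, Polynomial.C_0]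
    exact sub_eq_zero.mp hLR

open Polynomial in
lemma Gval (n : ℕ) (y : ℝ) :
    ∑ k ∈ range (n+1), (n.choose k : ℝ) * ((1:ℝ)+k)^(k-1) * (y + ((n-k:ℕ):ℝ))^(n-k)
      = (y + (n:ℝ) + 1)^n := by
  have h := congrArg (Polynomial.eval y) (Gpoly n 0)
  rw [Polynomial.eval_finset_sum, Polynomial.eval_pow] at h
  simp only [Polynomial.eval_mul, Polynomial.eval_pow, Polynomial.eval_add, Polynomial.eval_X,
    Polynomial.eval_C, add_zero] at h
  rw [h]
  ring_nf

lemma Fval (n : ℕ) (hn : 1 ≤ n) :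
    ∑ k ∈ range (n+1), (n.choose k : ℝ) * ((1:ℝ)+k)^(k-1) * ((1:ℝ)+((n-k:ℕ):ℝ))^(n-k-1)
      = 2*((n:ℝ)+2)^(n-1) := by
  have hsplit : ∀ k ∈ range (n+1),
      (n.choose k : ℝ) * ((1:ℝ)+k)^(k-1) * ((1:ℝ)+((n-k:ℕ):ℝ))^(n-k-1)
      = (n.choose k : ℝ) * ((1:ℝ)+k)^(k-1) * ((1:ℝ)+((n-k:ℕ):ℝ))^(n-k)
        - ((n-k:ℕ):ℝ) * ((n.choose k : ℝ) * ((1:ℝ)+k)^(k-1)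
            * ((1:ℝ)+((n-k:ℕ):ℝ))^(n-k-1)) := by
    intro k hk
    have hkey : ((1:ℝ)+((n-k:ℕ):ℝ))^(n-k)
        = ((1:ℝ)+((n-k:ℕ):ℝ)) * ((1:ℝ)+((n-k:ℕ):ℝ))^(n-k-1) := by
      rcases Nat.eq_zero_or_pos (n-k) with h0 | h1
      · rw [h0]; norm_num
      · rw [← pow_succ']
        congr 1
        omega
    rw [hkey]
    ring
  rw [Finset.sum_congr rfl hsplit, Finset.sum_sub_distrib]
  have hU : ∑ k ∈ range (n+1), (n.choose k : ℝ) * ((1:ℝ)+k)^(k-1)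
      * ((1:ℝ)+((n-k:ℕ):ℝ))^(n-k) = ((n:ℝ)+2)^n := by
    rw [Gval n 1]; ring_nf
  have hV : ∑ k ∈ range (n+1), ((n-k:ℕ):ℝ) * ((n.choose k : ℝ) * ((1:ℝ)+k)^(k-1)
      * ((1:ℝ)+((n-k:ℕ):ℝ))^(n-k-1)) = (n:ℝ) * ((n:ℝ)+2)^(n-1) := by
    rw [Finset.sum_range_succ]
    simp only [Nat.sub_self, Nat.cast_zero, zero_mul, add_zero]
    have hterm : ∀ k ∈ range n, ((n-k:ℕ):ℝ) * ((n.choose k : ℝ) * ((1:ℝ)+k)^(k-1)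
        * ((1:ℝ)+((n-k:ℕ):ℝ))^(n-k-1))
        = (n:ℝ) * (((n-1).choose k : ℝ) * ((1:ℝ)+k)^(k-1)
            * ((2:ℝ) + (((n-1)-k:ℕ):ℝ))^((n-1)-k)) := by
      intro k hk
      have hk' : k ≤ n - 1 := by have := mem_range.mp hk; omega
      have hch : (n-k) * n.choose k = n * (n-1).choose k := by
        have h := Nat.choose_mul_succ_eq (n-1) k
        have hn1 : n - 1 + 1 = n := by omega
        rw [hn1] at h
        calc (n-k) * n.choose k = n.choose k * (n-k) := Nat.mul_comm _ _
          _ = (n-1).choose k * n := h.symm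
          _ = n * (n-1).choose k := Nat.mul_comm _ _
      have hcast : ((n-k:ℕ):ℝ) * (n.choose k : ℝ) = (n:ℝ) * ((n-1).choose k : ℝ) := by
        exact_mod_cast congrArg (fun t : ℕ => (t:ℝ)) hch
      have hb : (1:ℝ)+((n-k:ℕ):ℝ) = (2:ℝ) + (((n-1)-k:ℕ):ℝ) := by
        have h1 : (n - k : ℕ) = ((n-1) - k) + 1 := by omega
        rw [h1]; push_cast; ring
      have he : n - k - 1 = (n-1) - k := by omega
      rw [hb, he]
      linear_combination ((1:ℝ)+(k:ℝ))^(k-1) * ((2:ℝ) + (((n-1)-k:ℕ):ℝ))^((n-1)-k) * hcast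
    rw [Finset.sum_congr rfl hterm, ← Finset.mul_sum]
    have hr : range n = range ((n-1)+1) := by rw [Nat.sub_add_cancel hn]
    rw [hr, Gval (n-1) 2, Nat.cast_sub hn]
    push_cast
    ring_nf
  rw [hU, hV]
  have hpow : ((n:ℝ)+2)^n = ((n:ℝ)+2)^(n-1) * ((n:ℝ)+2) := by
    rw [← pow_succ]
    congr 1
    omega
  rw [hpow]
  ring

theorem cayley_recursion (n : ℕ) (hn : 1 ≤ n) :
    (n : ℝ) ^ (n - 2) * ((n : ℝ) - 1) =
      (1 / 2) * ∑ m ∈ Finset.Ico 1 n,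
        (n.choose m : ℝ) * m * ((n - m : ℕ) : ℝ) * (m : ℝ) ^ (m - 2) *
          ((n - m : ℕ) : ℝ) ^ (n - m - 2) := by
  rcases Nat.lt_or_ge n 3 with h3 | h3
  · interval_cases n
    · simp
    · rw [Finset.sum_Ico_eq_sum_range]
      norm_num
  · rw [Finset.sum_Ico_eq_sum_range]
    have hterm : ∀ k ∈ range (n - 1),
        (n.choose (1+k) : ℝ) * ((1+k : ℕ) : ℝ) * ((n - (1+k) : ℕ) : ℝ)
            * ((1+k : ℕ) : ℝ) ^ ((1+k) - 2) * ((n - (1+k) : ℕ) : ℝ) ^ (n - (1+k) - 2)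
        = (n:ℝ) * ((n:ℝ)-1) * (((n-2).choose k : ℝ) * ((1:ℝ)+(k:ℝ))^(k-1)
            * ((1:ℝ)+(((n-2)-k:ℕ):ℝ))^((n-2)-k-1)) := by
      intro k hk
      have hk' : k ≤ n - 2 := by have := mem_range.mp hk; omega
      have s1 : (1+k) * n.choose (1+k) = n * (n-1).choose k := by
        have h := Nat.add_one_mul_choose_eq (n-1) k
        rw [Nat.sub_add_cancel hn] at h
        rw [show 1+k = k+1 by omega]
        calc (k+1) * n.choose (k+1) = n.choose (k+1) * (k+1) := Nat.mul_comm _ _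
          _ = n * (n-1).choose k := h.symm
      have s2 : (n-(1+k)) * (n-1).choose k = (n-1) * (n-2).choose k := by
        have h := Nat.choose_mul_succ_eq (n-2) k
        rw [show n-2+1 = n-1 by omega] at h
        rw [show n-(1+k) = (n-1)-k by omega]
        calc ((n-1)-k) * (n-1).choose k = (n-1).choose k * ((n-1)-k) := Nat.mul_comm _ _
          _ = (n-2).choose k * (n-1) := h.symm
          _ = (n-1) * (n-2).choose k := Nat.mul_comm _ _
      have hch : (1+k) * (n-(1+k)) * n.choose (1+k) = n * ((n-1) * (n-2).choose k) := by
        calc (1+k) * (n-(1+k)) * n.choose (1+k)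
            = (n-(1+k)) * ((1+k) * n.choose (1+k)) := by ring
          _ = (n-(1+k)) * (n * (n-1).choose k) := by rw [s1]
          _ = n * ((n-(1+k)) * (n-1).choose k) := by ring
          _ = n * ((n-1) * (n-2).choose k) := by rw [s2]
      have hcast : ((1+k:ℕ):ℝ) * ((n-(1+k):ℕ):ℝ) * (n.choose (1+k) : ℝ)
          = (n:ℝ) * (((n:ℝ)-1) * ((n-2).choose k : ℝ)) := by
        have := congrArg (fun t : ℕ => (t:ℝ)) hch
        push_cast [Nat.cast_sub hn] at this
        convert this using 2 <;> push_cast <;> ring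
      have e1 : (1+k) - 2 = k - 1 := by omega
      have e2 : n - (1+k) - 2 = (n-2) - k - 1 := by omega
      have hA : ((1+k:ℕ):ℝ) = (1:ℝ)+(k:ℝ) := by push_cast; ring
      have hB : ((n-(1+k):ℕ):ℝ) = (1:ℝ)+(((n-2)-k:ℕ):ℝ) := by
        rw [show n-(1+k) = ((n-2)-k)+1 by omega]
        push_cast; ring
      rw [e1, e2, hA, hB]
      rw [hA, hB] at hcast
      linear_combination ((1:ℝ)+(k:ℝ))^(k-1) * ((1:ℝ)+(((n-2)-k:ℕ):ℝ))^((n-2)-k-1) * hcast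
    rw [Finset.sum_congr rfl hterm, ← Finset.mul_sum]
    have hr : range (n-1) = range ((n-2)+1) := by rw [show (n-2)+1 = n-1 by omega]
    rw [hr, Fval (n-2) (by omega)]
    have hc : ((n-2:ℕ):ℝ) + 2 = (n:ℝ) := by
      rw [Nat.cast_sub (by omega : 2 ≤ n)]; push_cast; ring
    rw [hc]
    rw [show n - 2 = (n-3)+1 by omega, Nat.add_sub_cancel, pow_succ]
    ring
end

section
/- For all integers n ≥ 1 and k ≥ 2: Σ over x ∈ ℤ_{≥0}^k with x_1 + ⋯ + x_k = n of (n!/(x_1!⋯x_k!))·Π_{i=1}^k (n − x_i)^{x_i − 1} = k·(k−1)^{n−1}·n^{n−k}. -/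
open Polynomial Finset
open Polynomial Finset

noncomputable def Pa : ℕ → Polynomial ℝ
  | 0 => 1
  | (m+1) => X * (X - C ((m:ℝ)+1)) ^ m

lemma Pa_zero : Pa 0 = 1 := rfl
lemma Pa_succ (m : ℕ) : Pa (m+1) = X * (X - C ((m:ℝ)+1)) ^ m := rfl

lemma derivative_Pa (m : ℕ) :
    derivative (Pa (m+1)) = C ((m:ℝ)+1) * (Pa m).comp (X - 1) := by
  cases m with
  | zero => simp [Pa]
  | succ j =>
    simp only [Pa_succ, derivative_mul, derivative_X, derivative_pow, derivative_sub,
      derivative_C, derivative_add, derivative_one, one_mul, mul_one, sub_zero, zero_mul,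
      mul_zero, add_zero, zero_add, Nat.add_sub_cancel, mul_comp, X_comp,
      sub_comp, C_comp, pow_comp, add_comp, one_comp, Nat.cast_add, Nat.cast_one, C_add, C_1]
    rw [pow_succ]
    ring

lemma eval_zero_Pa (j : ℕ) : (Pa j).eval 0 = if j = 0 then 1 else 0 := by
  cases j with
  | zero => simp [Pa]
  | succ m => simp [Pa]

lemma abel_poly (n : ℕ) : ∀ y : ℝ,
    ∑ j ∈ range (n+1), C ((n.choose j : ℝ) * (y + j)^(n-j)) * Pa j = (X + C y)^n := by
  induction n with
  | zero => intro y; simp [Pa]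
  | succ n ih =>
    intro y
    set Q : ℝ[X] := ∑ j ∈ range (n+2), C (((n+1).choose j : ℝ) * (y + j)^(n+1-j)) * Pa j with hQ
    set R : ℝ[X] := (X + C y)^(n+1) with hR
    have key : ∑ i ∈ range (n+1),
        C ((n.choose i : ℝ) * ((y+1) + i)^(n-i)) * (Pa i).comp (X - 1)
        = (X + C y)^n := by
      have h := congrArg (fun p => p.comp (X - 1)) (ih (y+1))
      simp only [Polynomial.sum_comp, mul_comp, C_comp, add_comp, X_comp, pow_comp] at h
      rw [h, C_add, C_1]
      ring
    have hd : derivative Q = derivative R := by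
      have hQd : derivative Q
          = ∑ j ∈ range (n+2), C (((n+1).choose j : ℝ) * (y + j)^(n+1-j)) * derivative (Pa j) := by
        rw [hQ, derivative_sum]
        exact Finset.sum_congr rfl fun j _ => by rw [derivative_mul, derivative_C, zero_mul, zero_add]
      rw [hQd, Finset.sum_range_succ' _ (n+1)]
      simp only [Pa_zero, derivative_one, mul_zero, add_zero]
      have : ∀ i ∈ range (n+1),
          C (((n+1).choose (i+1) : ℝ) * (y + (i+1 : ℕ))^(n+1-(i+1))) * derivative (Pa (i+1))
          = C ((n:ℝ)+1) * (C ((n.choose i : ℝ) * ((y+1) + i)^(n-i)) * (Pa i).comp (X - 1)) := by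
        intro i _
        rw [derivative_Pa]
        have hc : (((n+1).choose (i+1) : ℝ)) * ((i:ℝ)+1) = ((n:ℝ)+1) * (n.choose i : ℝ) := by
          have := Nat.add_one_mul_choose_eq n i
          have h2 : ((n+1) * n.choose i : ℕ) = ((n+1).choose (i+1) * (i+1) : ℕ) := this
          exact_mod_cast h2.symm
        have harg : (y + ((i+1 : ℕ) : ℝ)) = (y + 1) + (i : ℝ) := by push_cast; ring
        have hexp : n + 1 - (i + 1) = n - i := by omega
        rw [harg, hexp]
        have hcc : C (((n+1).choose (i+1) : ℝ) * ((y+1) + (i:ℝ))^(n-i)) * C ((i:ℝ)+1)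
            = C ((n:ℝ)+1) * C ((n.choose i : ℝ) * ((y+1) + (i:ℝ))^(n-i)) := by
          rw [← C_mul, ← C_mul]
          congr 1
          linear_combination ((y+1) + (i:ℝ))^(n-i) * hc
        calc C (((n+1).choose (i+1) : ℝ) * ((y+1) + (i:ℝ))^(n-i)) * (C ((i:ℝ)+1) * (Pa i).comp (X-1))
            = (C (((n+1).choose (i+1) : ℝ) * ((y+1) + (i:ℝ))^(n-i)) * C ((i:ℝ)+1)) * (Pa i).comp (X-1) := by ring
          _ = (C ((n:ℝ)+1) * C ((n.choose i : ℝ) * ((y+1) + (i:ℝ))^(n-i))) * (Pa i).comp (X-1) := by rw [hcc]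
          _ = C ((n:ℝ)+1) * (C ((n.choose i : ℝ) * ((y+1) + (i:ℝ))^(n-i)) * (Pa i).comp (X-1)) := by ring
      rw [Finset.sum_congr rfl this, ← Finset.mul_sum, key]
      rw [hR, derivative_pow, derivative_add, derivative_X, derivative_C, add_zero,
        Nat.add_sub_cancel]
      push_cast
      ring
    have h0 : Q.eval 0 = R.eval 0 := by
      rw [hQ, hR, eval_finset_sum]
      rw [Finset.sum_eq_single 0]
      · simp [eval_zero_Pa]
      · intro j _ hj
        simp [eval_zero_Pa, hj]
      · simp
    have hsub : derivative (Q - R) = 0 := by rw [derivative_sub, hd, sub_self]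
    have hc := Polynomial.eq_C_of_derivative_eq_zero hsub
    have hcc : (Q - R).coeff 0 = 0 := by
      have : (Q - R).eval 0 = 0 := by rw [eval_sub, h0, sub_self]
      rw [coeff_zero_eq_eval_zero]
      exact this
    rw [hcc, map_zero, sub_eq_zero] at hc
    exact hc

lemma abel (n : ℕ) (x y : ℝ) :
    ∑ j ∈ range (n+1), (n.choose j : ℝ) * (y + j)^(n-j) * (Pa j).eval x = (x+y)^n := by
  have h := congrArg (eval x) (abel_poly n y)
  simpa [eval_finset_sum, mul_assoc] using h




lemma pa_split (m : ℕ) (Y : ℝ) :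
    (Pa m).eval Y = (Y - m)^m + (m:ℝ) * (Y - m)^(m-1) := by
  cases m with
  | zero => simp [Pa]
  | succ j =>
    simp only [Pa_succ, eval_mul, eval_pow, eval_sub, eval_X, eval_C, Nat.add_sub_cancel]
    push_cast
    rw [pow_succ]
    ring

lemma hurwitz (n : ℕ) (Xv Yv : ℝ) :
    ∑ x ∈ range (n+1), (n.choose x : ℝ) * (Pa x).eval Xv * (Pa (n-x)).eval Yv
      = (Pa n).eval (Xv + Yv) := by
  cases n with
  | zero => simp [Pa]
  | succ m =>
    set n := m + 1 with hn
    have hsplit : ∑ x ∈ range (n+1), (n.choose x : ℝ) * (Pa x).eval Xv * (Pa (n-x)).eval Yv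
        = (∑ x ∈ range (n+1), (n.choose x : ℝ) * ((Yv - n) + x)^(n-x) * (Pa x).eval Xv)
          + ∑ x ∈ range (n+1), (n.choose x : ℝ) * (Pa x).eval Xv *
              (((n-x : ℕ) : ℝ) * (Yv - ((n-x : ℕ) : ℝ))^(n-x-1)) := by
      rw [← Finset.sum_add_distrib]
      refine Finset.sum_congr rfl fun x hx => ?_
      have hxn : x ≤ n := by simp at hx; omega
      have hcast : ((n - x : ℕ) : ℝ) = (n : ℝ) - (x : ℝ) := by
        push_cast [Nat.cast_sub hxn]; ring
      rw [pa_split (n-x) Yv, hcast]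
      have : (Yv - ((n:ℝ) - x)) = (Yv - n) + x := by ring
      rw [this]
      ring
    rw [hsplit, abel n Xv (Yv - n)]
    have hS2 : ∑ x ∈ range (n+1), (n.choose x : ℝ) * (Pa x).eval Xv *
        (((n-x : ℕ) : ℝ) * (Yv - ((n-x : ℕ) : ℝ))^(n-x-1))
        = (n : ℝ) * (Xv + (Yv - n))^m := by
      rw [Finset.sum_range_succ]
      simp only [Nat.sub_self, Nat.cast_zero, zero_mul, mul_zero, add_zero]
      have hterm : ∀ x ∈ range n, (n.choose x : ℝ) * (Pa x).eval Xv *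
          (((n-x : ℕ) : ℝ) * (Yv - ((n-x : ℕ) : ℝ))^(n-x-1))
          = (n : ℝ) * ((m.choose x : ℝ) * ((Yv - n) + x)^(m-x) * (Pa x).eval Xv) := by
        intro x hx
        have hxm : x ≤ m := by simp at hx; omega
        have hcoef : (n.choose x : ℝ) * ((n - x : ℕ) : ℝ) = (n : ℝ) * (m.choose x : ℝ) := by
          have h := Nat.choose_mul_succ_eq m x
          have h2 : ((m+1).choose x * (m + 1 - x) : ℕ) = (m.choose x * (m+1) : ℕ) := h.symm
          have h3 : ((m+1).choose x * (m + 1 - x) : ℕ) = ((m+1) * m.choose x : ℕ) := by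
            rw [h2]; ring
          rw [hn]
          exact_mod_cast h3
        have hcast : ((n - x : ℕ) : ℝ) = (n : ℝ) - (x : ℝ) := by
          have : x ≤ n := by omega
          push_cast [Nat.cast_sub this]; ring
        have hexp : n - x - 1 = m - x := by omega
        rw [hexp]
        calc (n.choose x : ℝ) * (Pa x).eval Xv * (((n-x : ℕ) : ℝ) * (Yv - ((n-x : ℕ) : ℝ))^(m-x))
            = ((n.choose x : ℝ) * ((n - x : ℕ) : ℝ)) * (Pa x).eval Xv * (Yv - ((n-x : ℕ) : ℝ))^(m-x) := by ring
          _ = (n : ℝ) * (m.choose x : ℝ) * (Pa x).eval Xv * (Yv - ((n:ℝ) - x))^(m-x) := by rw [hcoef, hcast]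
          _ = (n : ℝ) * ((m.choose x : ℝ) * ((Yv - n) + x)^(m-x) * (Pa x).eval Xv) := by
              have : (Yv - ((n:ℝ) - x)) = (Yv - n) + x := by ring
              rw [this]; ring
      rw [Finset.sum_congr rfl hterm, ← Finset.mul_sum, abel m Xv (Yv - n)]
    rw [hS2]
    have : (Pa n).eval (Xv + Yv) = (Xv + Yv) * ((Xv + Yv) - n)^m := by
      simp only [hn, Pa_succ, eval_mul, eval_pow, eval_sub, eval_X, eval_C]
      push_cast; ring
    rw [this, hn]
    push_cast
    rw [pow_succ]
    ring




lemma mult_cons (k : ℕ) (j : ℕ) (y : Fin k → ℕ) :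
    Nat.multinomial Finset.univ (Fin.cons j y) =
      (j + ∑ i, y i).choose j * Nat.multinomial Finset.univ y := by
  have hpos : 0 < Nat.factorial j * ∏ i, Nat.factorial (y i) :=
    Nat.mul_pos (Nat.factorial_pos j) (Finset.prod_pos fun i _ => Nat.factorial_pos _)
  apply Nat.eq_of_mul_eq_mul_right hpos
  have hspec1 := Nat.multinomial_spec (Finset.univ : Finset (Fin (k+1))) (Fin.cons j y)
  have hspec2 := Nat.multinomial_spec (Finset.univ : Finset (Fin k)) y
  have hprod : (∏ i : Fin (k+1), Nat.factorial ((Fin.cons j y : Fin (k+1) → ℕ) i)) = Nat.factorial j * ∏ i, Nat.factorial (y i) := by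
    rw [show (fun i : Fin (k+1) => Nat.factorial ((Fin.cons j y : Fin (k+1) → ℕ) i)) = Fin.cons (Nat.factorial j) (fun i => Nat.factorial (y i)) from ?_]
    · exact Fin.prod_cons _ _
    · ext i
      refine Fin.cases ?_ ?_ i <;> simp
  have hsum : (∑ i : Fin (k+1), (Fin.cons j y : Fin (k+1) → ℕ) i) = j + ∑ i, y i := Fin.sum_cons j y
  calc Nat.multinomial Finset.univ (Fin.cons j y) * (Nat.factorial j * ∏ i, Nat.factorial (y i))
      = (∏ i : Fin (k+1), Nat.factorial ((Fin.cons j y : Fin (k+1) → ℕ) i)) * Nat.multinomial Finset.univ (Fin.cons j y) := by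
        rw [hprod]; ring
    _ = Nat.factorial (j + ∑ i, y i) := by rw [hspec1, hsum]
    _ = (j + ∑ i, y i).choose j * Nat.factorial j * Nat.factorial (∑ i, y i) := by
        have h := Nat.choose_mul_factorial_mul_factorial (Nat.le_add_right j (∑ i, y i))
        rw [Nat.add_sub_cancel_left] at h
        exact h.symm
    _ = (j + ∑ i, y i).choose j * Nat.multinomial Finset.univ y * (Nat.factorial j * ∏ i, Nat.factorial (y i)) := by
        rw [← hspec2]; ring

lemma sum_antidiagonalTuple_succ {M : Type*} [AddCommMonoid M] (k m : ℕ)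
    (f : (Fin (k+1) → ℕ) → M) :
    ∑ x ∈ Finset.Nat.antidiagonalTuple (k+1) m, f x
      = ∑ j ∈ range (m+1), ∑ y ∈ Finset.Nat.antidiagonalTuple k (m - j), f (Fin.cons j y) := by
  rw [← Finset.sum_sigma (range (m+1)) (fun j => Finset.Nat.antidiagonalTuple k (m - j))
    (fun p => f (Fin.cons p.1 p.2))]
  refine (Finset.sum_nbij' (fun x => (⟨x 0, Fin.tail x⟩ : Σ _ : ℕ, (Fin k → ℕ)))
    (fun p => Fin.cons p.1 p.2) ?_ ?_ ?_ ?_ ?_)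
  · intro x hx
    rw [Finset.Nat.mem_antidiagonalTuple] at hx
    rw [Fin.sum_univ_succ] at hx
    simp only [Finset.mem_sigma, Finset.mem_range, Finset.Nat.mem_antidiagonalTuple]
    constructor
    · omega
    · show (∑ i : Fin k, Fin.tail x i) = m - x 0
      simp only [Fin.tail]
      omega
  · intro p hp
    simp only [Finset.mem_sigma, Finset.mem_range, Finset.Nat.mem_antidiagonalTuple] at hp
    rw [Finset.Nat.mem_antidiagonalTuple, Fin.sum_cons, hp.2]
    omega
  · intro x _
    exact Fin.cons_self_tail x
  · intro p _
    ext
    · simp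
    · simp [Fin.tail_cons]
  · intro x _
    rw [Fin.cons_self_tail]

lemma multi (k m : ℕ) (N : ℝ) :
    ∑ x ∈ Finset.Nat.antidiagonalTuple k m,
      (Nat.multinomial Finset.univ x : ℝ) * ∏ i, (Pa (x i)).eval N
      = (Pa m).eval ((k : ℝ) * N) := by
  induction k generalizing m with
  | zero =>
    cases m with
    | zero => simp [Pa, Nat.multinomial]
    | succ j => simp [Pa]
  | succ k ih =>
    rw [sum_antidiagonalTuple_succ]
    have hterm : ∀ j ∈ range (m+1),
        ∑ y ∈ Finset.Nat.antidiagonalTuple k (m - j),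
          (Nat.multinomial Finset.univ (Fin.cons j y) : ℝ) * ∏ i : Fin (k+1), (Pa ((Fin.cons j y : Fin (k+1) → ℕ) i)).eval N
        = (m.choose j : ℝ) * (Pa j).eval N * (Pa (m-j)).eval ((k:ℝ) * N) := by
      intro j hj
      have hjm : j ≤ m := by simp at hj; omega
      have : ∀ y ∈ Finset.Nat.antidiagonalTuple k (m - j),
          (Nat.multinomial Finset.univ (Fin.cons j y) : ℝ) * ∏ i : Fin (k+1), (Pa ((Fin.cons j y : Fin (k+1) → ℕ) i)).eval N
          = (m.choose j : ℝ) * (Pa j).eval N *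
            ((Nat.multinomial Finset.univ y : ℝ) * ∏ i, (Pa (y i)).eval N) := by
        intro y hy
        rw [Finset.Nat.mem_antidiagonalTuple] at hy
        rw [mult_cons, hy]
        have hJ : j + (m - j) = m := by omega
        rw [hJ]
        have hprod : ∏ i : Fin (k+1), (Pa ((Fin.cons j y : Fin (k+1) → ℕ) i)).eval N
            = (Pa j).eval N * ∏ i, (Pa (y i)).eval N := by
          rw [show (fun i : Fin (k+1) => (Pa ((Fin.cons j y : Fin (k+1) → ℕ) i)).eval N)
            = Fin.cons ((Pa j).eval N) (fun i => (Pa (y i)).eval N) from ?_]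
          · exact Fin.prod_cons _ _
          · ext i
            refine Fin.cases ?_ ?_ i <;> simp
        rw [hprod]
        push_cast
        ring
      rw [Finset.sum_congr rfl this, ← Finset.mul_sum, ih (m - j)]
    rw [Finset.sum_congr rfl hterm, hurwitz m N ((k:ℝ) * N)]
    congr 1
    push_cast
    ring

theorem abramson_multinomial_identity (n k : ℕ) (hn : 1 ≤ n) (hk : 2 ≤ k) :
    ∑ x ∈ (Finset.Iic (fun _ : Fin k => n)).filter (fun x => ∑ i, x i = n),
        (Nat.multinomial Finset.univ x : ℝ) *
          ∏ i, (if x i = 0 then ((n : ℝ))⁻¹ else ((n - x i : ℕ) : ℝ) ^ (x i - 1))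
      = (k : ℝ) * ((k : ℝ) - 1) ^ (n - 1) * (n : ℝ) ^ ((n : ℝ) - (k : ℝ)) := by
  have hnpos : (0:ℝ) < (n:ℝ) := by exact_mod_cast hn
  have hnne : (n:ℝ) ≠ 0 := ne_of_gt hnpos
  have hset : (Finset.Iic (fun _ : Fin k => n)).filter (fun x => ∑ i, x i = n)
      = Finset.Nat.antidiagonalTuple k n := by
    ext x
    simp only [Finset.mem_filter, Finset.mem_Iic, Finset.Nat.mem_antidiagonalTuple, Pi.le_def]
    constructor
    · exact fun h => h.2
    · intro h
      refine ⟨fun i => ?_, h⟩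
      calc x i ≤ ∑ j, x j := Finset.single_le_sum (fun j _ => Nat.zero_le _) (Finset.mem_univ i)
        _ = n := h
  rw [hset]
  have hfactor : ∀ x ∈ Finset.Nat.antidiagonalTuple k n,
      (Nat.multinomial Finset.univ x : ℝ) *
        ∏ i, (if x i = 0 then ((n : ℝ))⁻¹ else ((n - x i : ℕ) : ℝ) ^ (x i - 1))
      = ((n:ℝ)⁻¹)^k * ((Nat.multinomial Finset.univ x : ℝ) * ∏ i, (Pa (x i)).eval (n:ℝ)) := by
    intro x hx
    rw [Finset.Nat.mem_antidiagonalTuple] at hx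
    have hle : ∀ i, x i ≤ n := fun i => by
      calc x i ≤ ∑ j, x j := Finset.single_le_sum (fun j _ => Nat.zero_le _) (Finset.mem_univ i)
        _ = n := hx
    have hi : ∀ i : Fin k, (if x i = 0 then ((n : ℝ))⁻¹ else ((n - x i : ℕ) : ℝ) ^ (x i - 1))
        = (Pa (x i)).eval (n:ℝ) * (n:ℝ)⁻¹ := by
      intro i
      rcases hxi : x i with _ | j
      · simp [Pa]
      · have hj : j + 1 ≤ n := hxi ▸ hle i
        have hcast : ((n - (j+1) : ℕ) : ℝ) = (n:ℝ) - ((j:ℝ)+1) := by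
          push_cast [Nat.cast_sub hj]; ring
        simp only [Nat.succ_ne_zero, if_false, Pa_succ, eval_mul, eval_pow, eval_sub,
          eval_X, eval_C, Nat.add_sub_cancel, hcast]
        field_simp
    rw [Finset.prod_congr rfl (fun i _ => hi i), Finset.prod_mul_distrib, Finset.prod_const]
    rw [Finset.card_univ, Fintype.card_fin]
    ring
  rw [Finset.sum_congr rfl hfactor, ← Finset.mul_sum, multi k n (n:ℝ)]
  obtain ⟨m, rfl⟩ : ∃ m, n = m + 1 := ⟨n - 1, by omega⟩
  have hPa : (Pa (m+1)).eval ((k:ℝ) * ((m+1:ℕ):ℝ))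
      = ((k:ℝ) * ((m+1:ℕ):ℝ)) * ((k:ℝ) * ((m+1:ℕ):ℝ) - ((m:ℝ)+1))^m := by
    simp [Pa_succ]
  rw [hPa]
  have hrpow : ((m+1:ℕ):ℝ) ^ ((((m+1:ℕ)):ℝ) - (k:ℝ))
      = ((m+1:ℕ):ℝ) ^ (m+1) / ((m+1:ℕ):ℝ) ^ k := by
    rw [← Real.rpow_natCast ((m+1:ℕ):ℝ) (m+1), ← Real.rpow_natCast ((m+1:ℕ):ℝ) k,
      ← Real.rpow_sub hnpos]
  rw [hrpow]
  have hred : (m + 1 - 1) = m := by omega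
  rw [hred]
  have hfac : ((k:ℝ) * ((m+1:ℕ):ℝ) - ((m:ℝ)+1)) = ((k:ℝ) - 1) * ((m+1:ℕ):ℝ) := by
    push_cast; ring
  rw [hfac, mul_pow]
  field_simp
  have hk' : ((m+1:ℕ):ℝ)^k * ((((m+1:ℕ):ℝ))⁻¹)^k = 1 := by
    rw [← mul_pow, mul_inv_cancel₀ hnne, one_pow]
  linear_combination (((m+1:ℕ):ℝ) * ((m+1:ℕ):ℝ)^m * ((k:ℝ)-1)^m) * hk'
end
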